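/- arXiv:1610.07297 — 17 statements merged into one kernel-verified Lean document; each statement's English description precedes it below -/
import Mathlib

section
/- Let W and V be B-DMCs with the same finite output alphabet Y, and assume V(y|x) > 0 for all y ∈ Y and x ∈ {0,1}. Then the average mismatched ML decoding error probability for a single use of W with equiprobable inputs, decoded by the ML rule of V, satisfies P_{e,ML}(W,V) ≤ min{1 − I(W,V), 1}. -/
open Finset
open scoped Classical

/-- A channel `W : {0,1} → Y` is a B-DMC if each row is a probability mass function. -/
def IsBDMC {Y : Type*} [Fintype Y] (W : Bool → Y → ℝ) : Prop :=
  (∀ x y, 0 ≤ W x y) ∧ (∀ x, ∑ y : Y, W x y = 1)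

/-- The output distribution of a channel under uniform inputs. -/
noncomputable def qOut {Y : Type*} (W : Bool → Y → ℝ) (y : Y) : ℝ :=
  (W false y + W true y) / 2

/-- The Δ parameter of a channel (with the convention 0/0 = 0, automatic in Lean). -/
noncomputable def Δch {Y : Type*} (V : Bool → Y → ℝ) (y : Y) : ℝ :=
  (V false y - V true y) / (V false y + V true y)

/-- The likelihood ratio of a channel. -/
noncomputable def LR {Y : Type*} (V : Bool → Y → ℝ) (y : Y) : ℝ :=
  V true y / V false y

/-- The mismatched mutual information `I(W, V)` (base-2 logarithm). -/
noncomputable def Imm {Y : Type*} [Fintype Y] (W V : Bool → Y → ℝ) : ℝ :=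
  (1/2) * ∑ x : Bool, ∑ y : Y, W x y * Real.logb 2 (V x y / qOut V y)

/-- The mismatched ML decoding error probability `P_{e,ML}(W, V)`. -/
noncomputable def PeML {Y : Type*} [Fintype Y] (W V : Bool → Y → ℝ) : ℝ :=
  (1/2) * ∑ y ∈ univ.filter (fun y => 1 < LR V y), W false y
  + (1/4) * ∑ y ∈ univ.filter (fun y => LR V y = 1), W false y
  + (1/2) * ∑ y ∈ univ.filter (fun y => LR V y < 1), W true y
  + (1/4) * ∑ y ∈ univ.filter (fun y => LR V y = 1), W true y

/-- The mismatched parameter `D(W, V)`. -/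
noncomputable def Dpar {Y : Type*} [Fintype Y] (W V : Bool → Y → ℝ) : ℝ :=
  ∑ y : Y, qOut W y * Real.sqrt |Δch V y|

/-- The mismatched variational distance `T(W, V)`. -/
noncomputable def Tpar {Y : Type*} [Fintype Y] (W V : Bool → Y → ℝ) : ℝ :=
  ∑ y : Y, qOut W y * |Δch V y|

/-- The mismatched parameter `T_k(W, V)`. -/
noncomputable def Tkpar {Y : Type*} [Fintype Y] (k : ℕ) (W V : Bool → Y → ℝ) : ℝ :=
  ∑ y : Y, qOut W y * |Δch V y| ^ k

/-- The mismatched Bhattacharyya parameter `Z(W, V)`. -/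
noncomputable def Zpar {Y : Type*} [Fintype Y] (W V : Bool → Y → ℝ) : ℝ :=
  (1/2) * ∑ y : Y, W false y * Real.sqrt (LR V y)
  + (1/2) * ∑ y : Y, W true y * Real.sqrt (1 / LR V y)

/-- The minus polar transform `W⁻(y₁y₂ | u₁) = (1/2) ∑_{u₂} W(y₁|u₁⊕u₂) W(y₂|u₂)`. -/
noncomputable def polarMinus {Y : Type*} (W : Bool → Y → ℝ) : Bool → Y × Y → ℝ :=
  fun u₁ p => (1/2) * ∑ u₂ : Bool, W (Bool.xor u₁ u₂) p.1 * W u₂ p.2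

/-- The plus polar transform `W⁺(y₁y₂u₁ | u₂) = (1/2) W(y₁|u₁⊕u₂) W(y₂|u₂)`,
with output `(y₁, y₂, u₁)`. -/
noncomputable def polarPlus {Y : Type*} (W : Bool → Y → ℝ) : Bool → Y × Y × Bool → ℝ :=
  fun u₂ p => (1/2) * W (Bool.xor p.2.2 u₂) p.1 * W u₂ p.2.1

/-- `P_{e,ML}(W, V) ≤ min {1 − I(W, V), 1}`. -/
theorem peML_le_min_one_sub_Imm {Y : Type*} [Fintype Y] (W V : Bool → Y → ℝ)
    (hW : IsBDMC W) (hV : IsBDMC V) (hVpos : ∀ x y, 0 < V x y) :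
    PeML W V ≤ min (1 - Imm W V) 1 := by
  obtain ⟨hW0, hW1⟩ := hW
  have hq : ∀ y, 0 < qOut V y := by
    intro y
    have h0 := hVpos false y
    have h1 := hVpos true y
    unfold qOut; linarith
  -- trichotomy partition of sums
  have tri : ∀ g : Y → ℝ,
      ∑ y ∈ univ.filter (fun y => LR V y < 1), g y
      + ∑ y ∈ univ.filter (fun y => LR V y = 1), g y
      + ∑ y ∈ univ.filter (fun y => 1 < LR V y), g y = ∑ y : Y, g y := by
    intro g
    rw [Finset.sum_filter, Finset.sum_filter, Finset.sum_filter,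
      ← Finset.sum_add_distrib, ← Finset.sum_add_distrib]
    apply Finset.sum_congr rfl
    intro y _
    rcases lt_trichotomy (LR V y) 1 with h | h | h
    · simp [h, ne_of_lt h, asymm h]
    · simp [h]
    · simp [asymm h, ne_of_gt h, h]
  have hAf := tri (W false)
  have hAt := tri (W true)
  rw [hW1 false] at hAf
  rw [hW1 true] at hAt
  -- nonnegativity of the filter sums
  have nn : ∀ (x : Bool) (s : Finset Y), 0 ≤ ∑ y ∈ s, W x y := fun x s =>
    Finset.sum_nonneg (fun y _ => hW0 x y)
  -- key bound: the mutual information terms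
  have hlog1 : ∀ (x : Bool) (y : Y), Real.logb 2 (V x y / qOut V y) ≤ 1 := by
    intro x y
    have hx := hVpos x y
    have h2 : V x y / qOut V y ≤ 2 := by
      rw [div_le_iff₀ (hq y)]
      have h0 := hVpos false y
      have h1 := hVpos true y
      unfold qOut
      cases x <;> simp <;> linarith
    calc Real.logb 2 (V x y / qOut V y) ≤ Real.logb 2 2 :=
          (Real.logb_le_logb one_lt_two (div_pos hx (hq y)) two_pos).2 h2
      _ = 1 := Real.logb_self_eq_one one_lt_two
  have hSf : ∑ y : Y, W false y * Real.logb 2 (V false y / qOut V y)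
      ≤ ∑ y ∈ univ.filter (fun y => LR V y < 1), W false y := by
    rw [Finset.sum_filter]
    apply Finset.sum_le_sum
    intro y _
    by_cases h : LR V y < 1
    · simp only [h, if_true]
      nlinarith [hlog1 false y, hW0 false y]
    · simp only [h, if_false]
      have hle : V false y ≤ V true y := by
        have := (not_lt.1 h)
        unfold LR at this
        rw [le_div_iff₀ (hVpos false y)] at this
        linarith
      have hd : V false y / qOut V y ≤ 1 := by
        rw [div_le_one (hq y)]
        unfold qOut; linarith
      have := Real.logb_nonpos one_lt_two (le_of_lt (div_pos (hVpos false y) (hq y))) hd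
      exact mul_nonpos_of_nonneg_of_nonpos (hW0 false y) this
  have hSt : ∑ y : Y, W true y * Real.logb 2 (V true y / qOut V y)
      ≤ ∑ y ∈ univ.filter (fun y => 1 < LR V y), W true y := by
    rw [Finset.sum_filter]
    apply Finset.sum_le_sum
    intro y _
    by_cases h : 1 < LR V y
    · simp only [h, if_true]
      nlinarith [hlog1 true y, hW0 true y]
    · simp only [h, if_false]
      have hle : V true y ≤ V false y := by
        have := (not_lt.1 h)
        unfold LR at this
        rw [div_le_one (hVpos false y)] at this
        linarith
      have hd : V true y / qOut V y ≤ 1 := by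
        rw [div_le_one (hq y)]
        unfold qOut; linarith
      have := Real.logb_nonpos one_lt_two (le_of_lt (div_pos (hVpos true y) (hq y))) hd
      exact mul_nonpos_of_nonneg_of_nonpos (hW0 true y) this
  have hImm : Imm W V ≤ (1/2) * (∑ y ∈ univ.filter (fun y => LR V y < 1), W false y
      + ∑ y ∈ univ.filter (fun y => 1 < LR V y), W true y) := by
    unfold Imm
    rw [Fintype.sum_bool]
    linarith
  have hPe : PeML W V = (1/2) * ∑ y ∈ univ.filter (fun y => 1 < LR V y), W false y
      + (1/4) * ∑ y ∈ univ.filter (fun y => LR V y = 1), W false y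
      + (1/2) * ∑ y ∈ univ.filter (fun y => LR V y < 1), W true y
      + (1/4) * ∑ y ∈ univ.filter (fun y => LR V y = 1), W true y := rfl
  have n1 := nn false (univ.filter (fun y => LR V y = 1))
  have n2 := nn true (univ.filter (fun y => LR V y = 1))
  have n3 := nn false (univ.filter (fun y => 1 < LR V y))
  have n4 := nn true (univ.filter (fun y => LR V y < 1))
  have n5 := nn false (univ.filter (fun y => LR V y < 1))
  have n6 := nn true (univ.filter (fun y => 1 < LR V y))
  apply le_min
  · rw [hPe]; linarith
  · rw [hPe]; linarith
end

section
/- Let W and V be B-DMCs with the same finite output alphabet Y, and assume W(y|x) > 0 and V(y|x) > 0 for all y ∈ Y and x ∈ {0,1}. Then I(W) ≥ I(W,V), where I(W) := I(W,W) is the symmetric capacity of W. -/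
open Finset
open scoped Classical

/-- `I(W) ≥ I(W, V)`. -/
theorem Imm_matched_ge_Imm {Y : Type*} [Fintype Y] (W V : Bool → Y → ℝ)
    (hW : IsBDMC W) (hV : IsBDMC V)
    (hWpos : ∀ x y, 0 < W x y) (hVpos : ∀ x y, 0 < V x y) :
    Imm W W ≥ Imm W V := by
  have hlog2 : (0:ℝ) < Real.log 2 := Real.log_pos (by norm_num)
  have hqW : ∀ y, 0 < qOut W y := by
    intro y; have h1 := hWpos false y; have h2 := hWpos true y
    unfold qOut; linarith
  have hqV : ∀ y, 0 < qOut V y := by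
    intro y; have h1 := hVpos false y; have h2 := hVpos true y
    unfold qOut; linarith
  set Q : Bool → Y → ℝ := fun x y => qOut W y * V x y / qOut V y with hQ
  have hQpos : ∀ x y, 0 < Q x y := by
    intro x y
    have := hqW y; have := hqV y; have := hVpos x y
    positivity
  have key : ∀ x y, W x y * Real.logb 2 (W x y / qOut W y)
      - W x y * Real.logb 2 (V x y / qOut V y) ≥ (W x y - Q x y) / Real.log 2 := by
    intro x y
    have hWp := hWpos x y
    have hVp := hVpos x y
    have hQp := hQpos x y
    have hqWy := hqW y
    have hqVy := hqV y
    have h1 : Real.logb 2 (W x y / qOut W y) - Real.logb 2 (V x y / qOut V y)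
        = Real.logb 2 (W x y / Q x y) := by
      rw [← Real.logb_div (by positivity) (by positivity)]
      congr 1
      field_simp [hQ]
      simp only [hQ]
      exact mul_div_cancel₀ _ (ne_of_gt hqVy)
    have h2 : Real.log (Q x y / W x y) ≤ Q x y / W x y - 1 :=
      Real.log_le_sub_one_of_pos (by positivity)
    have h3 : Real.log (W x y / Q x y) = - Real.log (Q x y / W x y) := by
      rw [Real.log_div (ne_of_gt hWp) (ne_of_gt hQp),
        Real.log_div (ne_of_gt hQp) (ne_of_gt hWp)]
      ring
    have h4 : W x y * (Q x y / W x y) = Q x y := mul_div_cancel₀ _ (ne_of_gt hWp)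
    have h5 : W x y * Real.log (W x y / Q x y) ≥ W x y - Q x y := by
      rw [h3]
      nlinarith [mul_le_mul_of_nonneg_left h2 (le_of_lt hWp)]
    rw [← mul_sub, h1]
    unfold Real.logb
    have heq : W x y * (Real.log (W x y / Q x y) / Real.log 2)
        = (W x y * Real.log (W x y / Q x y)) / Real.log 2 := by ring
    rw [ge_iff_le, heq]
    gcongr
  have hsum : ∑ x : Bool, ∑ y : Y, (W x y - Q x y) = 0 := by
    have hWsum : ∑ x : Bool, ∑ y : Y, W x y = 2 := by
      rw [Fintype.sum_bool, hW.2, hW.2]; norm_num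
    have hQsum : ∑ x : Bool, ∑ y : Y, Q x y = 2 := by
      rw [Fintype.sum_bool, ← Finset.sum_add_distrib]
      have : ∀ y, Q true y + Q false y = W false y + W true y := by
        intro y
        have h1 := hVpos false y
        have h2 := hVpos true y
        have hne : V false y + V true y ≠ 0 := by positivity
        simp only [hQ]
        unfold qOut
        field_simp
        ring
      rw [Finset.sum_congr rfl (fun y _ => this y), Finset.sum_add_distrib, hW.2, hW.2]
      norm_num
    rw [Fintype.sum_bool] at hWsum hQsum ⊢
    rw [Finset.sum_sub_distrib, Finset.sum_sub_distrib]
    linarith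
  have main : Imm W W - Imm W V ≥ 0 := by
    unfold Imm
    rw [← mul_sub, ← Finset.sum_sub_distrib]
    have : ∀ x ∈ (Finset.univ : Finset Bool),
        (∑ y : Y, W x y * Real.logb 2 (W x y / qOut W y))
        - ∑ y : Y, W x y * Real.logb 2 (V x y / qOut V y)
        ≥ ∑ y : Y, (W x y - Q x y) / Real.log 2 := by
      intro x _
      rw [← Finset.sum_sub_distrib]
      exact Finset.sum_le_sum fun y _ => key x y
    have h6 : ∑ x : Bool, ∑ y : Y, (W x y - Q x y) / Real.log 2 = 0 := by
      simp only [← Finset.sum_div, hsum]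
      simp
    have h7 := Finset.sum_le_sum this
    rw [h6] at h7
    nlinarith
  linarith
end

section
/- Let W and V be B-DMCs with the same finite output alphabet Y, and assume V(y|x) > 0 for all y ∈ Y and x ∈ {0,1}. Then I(W,V) ≤ D(W,V)/ln 2. -/
open Finset
open scoped Classical

/-- `I(W, V) ≤ D(W, V) / ln 2`. -/
theorem Imm_le_Dpar_div_log_two {Y : Type*} [Fintype Y] (W V : Bool → Y → ℝ)
    (hW : IsBDMC W) (hV : IsBDMC V) (hVpos : ∀ x y, 0 < V x y) :
    Imm W V ≤ Dpar W V / Real.log 2 := by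
  obtain ⟨hWnn, _⟩ := hW
  have hlog2 : (0:ℝ) < Real.log 2 := Real.log_pos one_lt_two
  have key : ∀ y : Y, (1/2) * (∑ x : Bool, W x y * Real.log (V x y / qOut V y))
      ≤ qOut W y * Real.sqrt |Δch V y| := by
    intro y
    have hVfpos := hVpos false y
    have hVtpos := hVpos true y
    have hsum : (0:ℝ) < V false y + V true y := by linarith
    have hq : 0 < qOut V y := by unfold qOut; linarith
    have hΔ : Δch V y = (V false y - V true y) / (V false y + V true y) := rfl
    have hf : V false y / qOut V y - 1 = Δch V y := by
      rw [hΔ]; unfold qOut; field_simp; ring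
    have ht : V true y / qOut V y - 1 = - Δch V y := by
      rw [hΔ]; unfold qOut; field_simp; ring
    have h1 : ∑ x : Bool, W x y * Real.log (V x y / qOut V y)
        ≤ W true y * (- Δch V y) + W false y * (Δch V y) := by
      rw [Fintype.sum_bool, ← ht, ← hf]
      have a1 := mul_le_mul_of_nonneg_left
        (Real.log_le_sub_one_of_pos (div_pos hVtpos hq)) (hWnn true y)
      have a2 := mul_le_mul_of_nonneg_left
        (Real.log_le_sub_one_of_pos (div_pos hVfpos hq)) (hWnn false y)
      linarith
    have hΔabs : |Δch V y| ≤ 1 := by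
      rw [hΔ, abs_div, abs_of_pos hsum, div_le_one hsum]
      rcases abs_cases (V false y - V true y) with ⟨h, _⟩ | ⟨h, _⟩ <;> linarith
    have hsqrt : |Δch V y| ≤ Real.sqrt |Δch V y| := by
      nlinarith [Real.sq_sqrt (abs_nonneg (Δch V y)), Real.sqrt_nonneg |Δch V y|,
        abs_nonneg (Δch V y), hΔabs]
    have hb : (1/2) * (W true y * (- Δch V y) + W false y * (Δch V y))
        ≤ qOut W y * |Δch V y| := by
      have h3 : (1/2) * (W true y * (- Δch V y) + W false y * (Δch V y))
          ≤ |(W false y - W true y)/2| * |Δch V y| := by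
        rw [← abs_mul]
        have : (1/2) * (W true y * (- Δch V y) + W false y * (Δch V y))
            = (W false y - W true y)/2 * Δch V y := by ring
        rw [this]; exact le_abs_self _
      have h4 : |(W false y - W true y)/2| ≤ qOut W y := by
        have hwf := hWnn false y
        have hwt := hWnn true y
        unfold qOut
        rcases abs_cases ((W false y - W true y)/2) with ⟨h, _⟩ | ⟨h, _⟩ <;> linarith
      calc (1/2) * (W true y * (- Δch V y) + W false y * (Δch V y))
          ≤ |(W false y - W true y)/2| * |Δch V y| := h3
        _ ≤ qOut W y * |Δch V y| :=
            mul_le_mul_of_nonneg_right h4 (abs_nonneg _)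
    calc (1/2) * (∑ x : Bool, W x y * Real.log (V x y / qOut V y))
        ≤ (1/2) * (W true y * (- Δch V y) + W false y * (Δch V y)) := by linarith
      _ ≤ qOut W y * |Δch V y| := hb
      _ ≤ qOut W y * Real.sqrt |Δch V y| := by
          apply mul_le_mul_of_nonneg_left hsqrt
          have := hWnn false y; have := hWnn true y
          unfold qOut; linarith
  have hImm : Imm W V
      = ((1/2) * ∑ x : Bool, ∑ y : Y, W x y * Real.log (V x y / qOut V y)) / Real.log 2 := by
    unfold Imm
    simp only [Real.logb]
    rw [mul_div_assoc]
    congr 1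
    rw [Finset.sum_div]
    refine Finset.sum_congr rfl fun x _ => ?_
    rw [Finset.sum_div]
    exact Finset.sum_congr rfl fun y _ => (mul_div_assoc _ _ _).symm
  rw [hImm, div_le_div_iff_of_pos_right hlog2]
  rw [Finset.sum_comm, Finset.mul_sum]
  exact Finset.sum_le_sum fun y _ => key y
end

section
/- Let W and V be B-DMCs with the same finite output alphabet Y, and assume V(y|x) > 0 for all y ∈ Y and x ∈ {0,1}. Then the mismatched ML decoding error probability satisfies P_{e,ML}(W,V) ≤ Z(W,V). -/
open Finset
open scoped Classical

/-- `P_{e,ML}(W, V) ≤ Z(W, V)`. -/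
theorem peML_le_Zpar {Y : Type*} [Fintype Y] (W V : Bool → Y → ℝ)
    (hW : IsBDMC W) (hV : IsBDMC V) (hVpos : ∀ x y, 0 < V x y) :
    PeML W V ≤ Zpar W V := by
  have hWnn := hW.1
  have hLRpos : ∀ y, 0 < LR V y := fun y => div_pos (hVpos true y) (hVpos false y)
  unfold PeML Zpar
  rw [Finset.mul_sum, Finset.mul_sum, Finset.mul_sum, Finset.mul_sum, Finset.mul_sum,
    Finset.mul_sum, Finset.sum_filter, Finset.sum_filter, Finset.sum_filter, Finset.sum_filter,
    ← Finset.sum_add_distrib, ← Finset.sum_add_distrib, ← Finset.sum_add_distrib,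
    ← Finset.sum_add_distrib]
  apply Finset.sum_le_sum
  intro y _
  have hf := hWnn false y
  have ht := hWnn true y
  have hLR := hLRpos y
  rcases lt_trichotomy (LR V y) 1 with h | h | h
  · simp only [h, not_lt, h.le, h.ne, if_false, if_true, asymm h]
    have h1 : (1:ℝ) ≤ 1 / LR V y := one_le_one_div hLR h.le
    have : (1:ℝ) ≤ Real.sqrt (1 / LR V y) :=
      Real.le_sqrt_of_sq_le (by nlinarith)
    nlinarith [Real.sqrt_nonneg (LR V y), mul_nonneg hf (Real.sqrt_nonneg (LR V y)),
      mul_le_mul_of_nonneg_left this ht]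
  · simp only [h, lt_irrefl, if_false, if_true, Real.sqrt_one, one_div_one]
    nlinarith
  · simp only [h, not_lt, h.le, h.ne', if_false, if_true, asymm h]
    have : (1:ℝ) ≤ Real.sqrt (LR V y) :=
      Real.le_sqrt_of_sq_le (by nlinarith)
    nlinarith [Real.sqrt_nonneg (1 / LR V y),
      mul_nonneg ht (Real.sqrt_nonneg (1 / LR V y)),
      mul_le_mul_of_nonneg_left this hf]
end

section
/- Let W and V be B-DMCs with the same finite output alphabet Y, and assume V(y|x) > 0 for all y ∈ Y and x ∈ {0,1}. Then D(W,V) + Z(W,V) ≥ 1. -/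
open Finset
open scoped Classical

private lemma aux_sqrt (a b : ℝ) (ha : 0 < a) (hb : 0 < b) :
    1 ≤ Real.sqrt (|a - b| / (a + b)) + Real.sqrt (b / a) := by
  rcases le_or_gt a b with h | h
  · have h1 : (1:ℝ) ≤ Real.sqrt (b / a) := by
      rw [show (1:ℝ) = Real.sqrt 1 by simp]
      exact Real.sqrt_le_sqrt ((one_le_div ha).mpr h)
    linarith [Real.sqrt_nonneg (|a - b| / (a + b))]
  · set t := Real.sqrt (b / a) with htdef
    have ht0 : 0 ≤ t := Real.sqrt_nonneg _
    have ht2 : t ^ 2 = b / a := Real.sq_sqrt (by positivity)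
    have hb' : a * t ^ 2 = b := by rw [ht2]; field_simp
    have habs : |a - b| = a - b := abs_of_pos (by linarith)
    rw [habs]
    rcases le_or_gt (1 - t) 0 with h0 | h0
    · linarith [Real.sqrt_nonneg ((a - b) / (a + b))]
    · have hkey : (1 - t) ^ 2 * (a + b) ≤ a - b := by nlinarith [sq_nonneg (1 - t), sq_nonneg t, mul_nonneg ht0 ht0, mul_pos ha (mul_pos h0 h0)]
      have hle : (1 - t) ^ 2 ≤ (a - b) / (a + b) :=
        (le_div_iff₀ (by linarith)).mpr hkey
      have := Real.sqrt_le_sqrt hle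
      rw [Real.sqrt_sq h0.le] at this
      linarith

/-- `D(W, V) + Z(W, V) ≥ 1`. -/
theorem Dpar_add_Zpar_ge_one {Y : Type*} [Fintype Y] (W V : Bool → Y → ℝ)
    (hW : IsBDMC W) (hV : IsBDMC V) (hVpos : ∀ x y, 0 < V x y) :
    Dpar W V + Zpar W V ≥ 1 := by
  have hsum : ∑ y : Y, qOut W y = 1 := by
    unfold qOut
    rw [← Finset.sum_div, Finset.sum_add_distrib, hW.2 false, hW.2 true]
    norm_num
  have key : ∀ y : Y, qOut W y ≤ qOut W y * Real.sqrt |Δch V y|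
      + ((1/2) * (W false y * Real.sqrt (LR V y)) + (1/2) * (W true y * Real.sqrt (1 / LR V y))) := by
    intro y
    have ha : 0 < V false y := hVpos false y
    have hb : 0 < V true y := hVpos true y
    have hW0 : 0 ≤ W false y := hW.1 false y
    have hW1 : 0 ≤ W true y := hW.1 true y
    have hΔ : |Δch V y| = |V false y - V true y| / (V false y + V true y) := by
      unfold Δch
      rw [abs_div]
      congr 1
      exact abs_of_pos (by linarith)
    have hLR : LR V y = V true y / V false y := rfl
    have hLR' : 1 / LR V y = V false y / V true y := by
      rw [hLR]; field_simp
    have h1 := aux_sqrt (V false y) (V true y) ha hb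
    have h2 := aux_sqrt (V true y) (V false y) hb ha
    rw [abs_sub_comm, add_comm (V true y)] at h2
    rw [hΔ] at *
    unfold qOut
    rw [hLR', hLR]
    nlinarith [h1, h2, hW0, hW1]
  have heq : Dpar W V + Zpar W V = ∑ y : Y, (qOut W y * Real.sqrt |Δch V y|
      + ((1/2) * (W false y * Real.sqrt (LR V y)) + (1/2) * (W true y * Real.sqrt (1 / LR V y)))) := by
    unfold Dpar Zpar
    rw [Finset.sum_add_distrib, Finset.sum_add_distrib, Finset.mul_sum, Finset.mul_sum]
  rw [ge_iff_le, heq]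
  calc (1:ℝ) = ∑ y : Y, qOut W y := hsum.symm
    _ ≤ _ := Finset.sum_le_sum (fun y _ => key y)
end

section
/- For every real x > 0, |tanh(ln x)| + x ≥ 1. -/
open Finset
open scoped Classical

/-- For every real `x > 0`, `|tanh (ln x)| + x ≥ 1`. -/
theorem abs_tanh_log_add_self_ge_one (x : ℝ) (hx : 0 < x) :
    |Real.tanh (Real.log x)| + x ≥ 1 := by
  have hx2 : (0:ℝ) < x^2 + 1 := by positivity
  have ht : Real.tanh (Real.log x) = (x^2 - 1) / (x^2 + 1) := by
    rw [Real.tanh_eq_sinh_div_cosh, Real.sinh_eq, Real.cosh_eq,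
      Real.exp_log hx, Real.exp_neg, Real.exp_log hx]
    field_simp
  rw [ht]
  rcases le_or_gt 1 x with h | h
  · have : |((x^2-1)/(x^2+1))| ≥ 0 := abs_nonneg _
    linarith
  · rw [abs_div, abs_of_nonpos (by nlinarith), abs_of_pos hx2]
    rw [ge_iff_le, div_add' _ _ _ hx2.ne', le_div_iff₀ hx2]
    nlinarith [mul_nonneg hx.le (sq_nonneg (x-1))]
end

section
/- Let W and V be B-DMCs with the same finite output alphabet Y, and assume V(y|x) > 0 for all y ∈ Y and x ∈ {0,1}. Then the minus polar transform satisfies D(W⁻, V⁻) = D(W,V)². -/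
open Finset
open scoped Classical

/-- `D(W⁻, V⁻) = D(W, V)²`. -/
theorem Dpar_polarMinus {Y : Type*} [Fintype Y] (W V : Bool → Y → ℝ)
    (hW : IsBDMC W) (hV : IsBDMC V) (hVpos : ∀ x y, 0 < V x y) :
    Dpar (polarMinus W) (polarMinus V) = Dpar W V ^ 2 := by
  have key : ∀ p : Y × Y,
      qOut (polarMinus W) p * Real.sqrt |Δch (polarMinus V) p|
        = (qOut W p.1 * Real.sqrt |Δch V p.1|) * (qOut W p.2 * Real.sqrt |Δch V p.2|) := by
    rintro ⟨y₁, y₂⟩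
    have hq : qOut (polarMinus W) (y₁, y₂) = qOut W y₁ * qOut W y₂ := by
      simp [qOut, polarMinus, Fintype.sum_bool]
      ring
    have hd : Δch (polarMinus V) (y₁, y₂) = Δch V y₁ * Δch V y₂ := by
      have ha := hVpos false y₁
      have hb := hVpos true y₁
      have hc := hVpos false y₂
      have hd' := hVpos true y₂
      have h1 : V false y₁ + V true y₁ ≠ 0 := by positivity
      have h2 : V false y₂ + V true y₂ ≠ 0 := by positivity
      have h3 : (2:ℝ)⁻¹ * (V true y₁ * V true y₂ + V false y₁ * V false y₂)
          + 2⁻¹ * (V false y₁ * V true y₂ + V true y₁ * V false y₂) ≠ 0 := by positivity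
      simp only [Δch, polarMinus, Fintype.sum_bool]
      rw [div_mul_div_comm]
      rw [div_eq_div_iff (by simpa using h3) (by exact mul_ne_zero h1 h2)]
      simp only [Bool.xor_false, Bool.xor_true, Bool.not_false, Bool.not_true]
      ring
    rw [hq, hd, abs_mul, Real.sqrt_mul (abs_nonneg _)]
    ring
  have hfac : Dpar (polarMinus W) (polarMinus V)
      = ∑ y₁ : Y, ∑ y₂ : Y,
          (qOut W y₁ * Real.sqrt |Δch V y₁|) * (qOut W y₂ * Real.sqrt |Δch V y₂|) := by
    rw [Dpar, Fintype.sum_prod_type]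
    exact Finset.sum_congr rfl fun y₁ _ => Finset.sum_congr rfl fun y₂ _ => key (y₁, y₂)
  rw [hfac, Dpar, sq, Finset.sum_mul_sum]
end

section
/- Let W and V be B-DMCs with the same finite output alphabet Y, and assume V(y|x) > 0 for all y ∈ Y and x ∈ {0,1}. Then the plus polar transform satisfies D(W⁺, V⁺) ≤ 2·D(W,V) − D(W,V)². -/
open Finset
open scoped Classical

set_option maxHeartbeats 1000000 in
lemma aux_abs_DWV (d1 d2 : ℝ) (h1 : |d1| < 1) (h2 : |d2| < 1) :
    |(d1+d2)/(1+d1*d2)| ≤ (|d1| + |d2|)/(1 + |d1| * |d2|) := by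
  have hd1 := abs_lt.mp h1
  have hd2 := abs_lt.mp h2
  have hs1 : d1^2 < 1 := by nlinarith [hd1.1, hd1.2]
  have hs2 : d2^2 < 1 := by nlinarith [hd2.1, hd2.2]
  have hden2 : 0 < 1 + |d1| * |d2| := by positivity
  have hden1 : 0 < 1 + d1*d2 := by
    nlinarith [neg_abs_le (d1*d2), abs_mul d1 d2, abs_nonneg d1, abs_nonneg d2]
  rw [abs_div, abs_of_pos hden1, div_le_div_iff₀ hden1 hden2]
  rcases le_or_gt 0 (d1*d2) with hc | hc
  · have e : |d1| * |d2| = d1*d2 := by rw [← abs_mul, abs_of_nonneg hc]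
    rw [e]
    exact mul_le_mul_of_nonneg_right (abs_add_le d1 d2) hden1.le
  · have e : |d1| * |d2| = -(d1*d2) := by rw [← abs_mul, abs_of_neg hc]
    rw [e]
    rcases abs_cases d1 with ⟨e1, f1⟩ | ⟨e1, f1⟩ <;>
    rcases abs_cases d2 with ⟨e2, f2⟩ | ⟨e2, f2⟩ <;>
    rcases abs_cases (d1+d2) with ⟨e3, f3⟩ | ⟨e3, f3⟩ <;>
      rw [e1, e2, e3] <;> nlinarith [hs1, hs2, hc, f1, f2, f3]

lemma aux_sqrt_DWV (a b : ℝ) (ha : 0 ≤ a) (ha1 : a ≤ 1) (hb : 0 ≤ b) (hb1 : b ≤ 1) :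
    Real.sqrt ((a+b)/(1+a*b)) ≤ Real.sqrt a + Real.sqrt b - Real.sqrt a * Real.sqrt b := by
  set u := Real.sqrt a with hu
  set v := Real.sqrt b with hv
  have hu0 : 0 ≤ u := Real.sqrt_nonneg a
  have hv0 : 0 ≤ v := Real.sqrt_nonneg b
  have hu1 : u ≤ 1 := Real.sqrt_le_one.mpr ha1
  have hv1 : v ≤ 1 := Real.sqrt_le_one.mpr hb1
  have hua : u^2 = a := Real.sq_sqrt ha
  have hvb : v^2 = b := Real.sq_sqrt hb
  have hR : 0 ≤ u + v - u*v := by nlinarith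
  have hkey : (a+b)/(1+a*b) ≤ (u + v - u*v)^2 := by
    rw [div_le_iff₀ (by positivity), ← hua, ← hvb]
    have hlast : 0 ≤ 2 - u*v*(1+u+v-u*v) := by nlinarith
    have h : 0 ≤ u*v*(1-u)*(1-v)*(2 - u*v*(1+u+v-u*v)) := by
      have h2 : 0 ≤ u*v*(1-u)*(1-v) := by
        apply mul_nonneg; apply mul_nonneg; positivity; linarith; linarith
      exact mul_nonneg h2 hlast
    nlinarith [h]
  calc Real.sqrt ((a+b)/(1+a*b)) ≤ Real.sqrt ((u+v-u*v)^2) := Real.sqrt_le_sqrt hkey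
    _ = u + v - u*v := by rw [Real.sqrt_sq hR]

lemma key_arith_DWV (w0 w1 x0 x1 v0 v1 t0 t1 : ℝ)
    (hw0 : 0 ≤ w0) (hw1 : 0 ≤ w1) (hx0 : 0 ≤ x0) (hx1 : 0 ≤ x1)
    (hv0 : 0 < v0) (hv1 : 0 < v1) (ht0 : 0 < t0) (ht1 : 0 < t1) :
    (w0*x0 + w1*x1)/4 * Real.sqrt |(v0*t0 - v1*t1)/(v0*t0 + v1*t1)|
      + (w1*x0 + w0*x1)/4 * Real.sqrt |(v1*t0 - v0*t1)/(v1*t0 + v0*t1)|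
    ≤ (w0+w1)/2 * ((x0+x1)/2) *
        (Real.sqrt |(v0-v1)/(v0+v1)| + Real.sqrt |(t0-t1)/(t0+t1)|
          - Real.sqrt |(v0-v1)/(v0+v1)| * Real.sqrt |(t0-t1)/(t0+t1)|) := by
  set d1 : ℝ := (v0-v1)/(v0+v1) with hd1def
  set d2 : ℝ := (t0-t1)/(t0+t1) with hd2def
  have hvsum : (0:ℝ) < v0 + v1 := by linarith
  have htsum : (0:ℝ) < t0 + t1 := by linarith
  have h1 : |d1| < 1 := by
    rw [abs_div, abs_of_pos hvsum, div_lt_one hvsum]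
    rcases abs_cases (v0 - v1) with ⟨e, _⟩ | ⟨e, _⟩ <;> rw [e] <;> linarith
  have h2 : |d2| < 1 := by
    rw [abs_div, abs_of_pos htsum, div_lt_one htsum]
    rcases abs_cases (t0 - t1) with ⟨e, _⟩ | ⟨e, _⟩ <;> rw [e] <;> linarith
  have hs1 := abs_lt.mp h1
  have hs2 := abs_lt.mp h2
  have hden1 : (0:ℝ) < 1 + d1*d2 := by nlinarith [hs1.1, hs1.2, hs2.1, hs2.2]
  have hden1' : (0:ℝ) < 1 + (-d1)*d2 := by nlinarith [hs1.1, hs1.2, hs2.1, hs2.2]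
  have hP1 : (0:ℝ) < v0*t0 + v1*t1 := by positivity
  have hP2 : (0:ℝ) < v1*t0 + v0*t1 := by positivity
  have hplus : (v0*t0 - v1*t1)/(v0*t0 + v1*t1) = (d1 + d2)/(1 + d1*d2) := by
    rw [div_eq_div_iff hP1.ne' hden1.ne', hd1def, hd2def]
    field_simp
    ring
  have hminus : (v1*t0 - v0*t1)/(v1*t0 + v0*t1) = (-d1 + d2)/(1 + (-d1)*d2) := by
    rw [div_eq_div_iff hP2.ne' hden1'.ne', hd1def, hd2def]
    field_simp
    ring
  set a : ℝ := |d1| with hadef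
  set b : ℝ := |d2| with hbdef
  have ha0 : 0 ≤ a := abs_nonneg d1
  have hb0 : 0 ≤ b := abs_nonneg d2
  have habden : (0:ℝ) < 1 + a*b := by positivity
  set R : ℝ := Real.sqrt a + Real.sqrt b - Real.sqrt a * Real.sqrt b with hRdef
  have hsq : Real.sqrt ((a+b)/(1+a*b)) ≤ R := aux_sqrt_DWV a b ha0 h1.le hb0 h2.le
  have hR0 : 0 ≤ R := le_trans (Real.sqrt_nonneg _) hsq
  have e1 : Real.sqrt |(v0*t0 - v1*t1)/(v0*t0 + v1*t1)| ≤ R := by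
    rw [hplus]
    refine le_trans (le_trans (Real.sqrt_le_sqrt (aux_abs_DWV d1 d2 h1 h2)) ?_) hsq
    exact le_of_eq rfl
  have e2 : Real.sqrt |(v1*t0 - v0*t1)/(v1*t0 + v0*t1)| ≤ R := by
    rw [hminus]
    have := aux_abs_DWV (-d1) d2 (by rwa [abs_neg]) h2
    rw [abs_neg] at this
    exact le_trans (Real.sqrt_le_sqrt this) hsq
  have hc1 : (0:ℝ) ≤ (w0*x0 + w1*x1)/4 := by positivity
  have hc2 : (0:ℝ) ≤ (w1*x0 + w0*x1)/4 := by positivity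
  calc (w0*x0 + w1*x1)/4 * Real.sqrt |(v0*t0 - v1*t1)/(v0*t0 + v1*t1)|
      + (w1*x0 + w0*x1)/4 * Real.sqrt |(v1*t0 - v0*t1)/(v1*t0 + v0*t1)|
      ≤ (w0*x0 + w1*x1)/4 * R + (w1*x0 + w0*x1)/4 * R :=
        add_le_add (mul_le_mul_of_nonneg_left e1 hc1) (mul_le_mul_of_nonneg_left e2 hc2)
    _ = (w0+w1)/2 * ((x0+x1)/2) * R := by ring

lemma key_chan_DWV {Y : Type*} (W V : Bool → Y → ℝ) (y₁ y₂ : Y)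
    (hW : ∀ x y, 0 ≤ W x y) (hV : ∀ x y, 0 < V x y) :
    qOut (polarPlus W) (y₁, y₂, false) * Real.sqrt |Δch (polarPlus V) (y₁, y₂, false)|
      + qOut (polarPlus W) (y₁, y₂, true) * Real.sqrt |Δch (polarPlus V) (y₁, y₂, true)|
    ≤ qOut W y₁ * qOut W y₂ *
        (Real.sqrt |Δch V y₁| + Real.sqrt |Δch V y₂|
          - Real.sqrt |Δch V y₁| * Real.sqrt |Δch V y₂|) := by
  have hv0 := hV false y₁; have hv1 := hV true y₁
  have ht0 := hV false y₂; have ht1 := hV true y₂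
  have eq1 : qOut (polarPlus W) (y₁, y₂, false)
      = (W false y₁ * W false y₂ + W true y₁ * W true y₂)/4 := by
    simp [qOut, polarPlus]; ring
  have eq2 : qOut (polarPlus W) (y₁, y₂, true)
      = (W true y₁ * W false y₂ + W false y₁ * W true y₂)/4 := by
    simp [qOut, polarPlus]; ring
  have eq3 : Δch (polarPlus V) (y₁, y₂, false)
      = (V false y₁ * V false y₂ - V true y₁ * V true y₂)
        / (V false y₁ * V false y₂ + V true y₁ * V true y₂) := by
    simp only [Δch, polarPlus, Bool.xor]
    norm_num
    rw [div_eq_div_iff (ne_of_gt (by positivity)) (ne_of_gt (by positivity))]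
    ring
  have eq4 : Δch (polarPlus V) (y₁, y₂, true)
      = (V true y₁ * V false y₂ - V false y₁ * V true y₂)
        / (V true y₁ * V false y₂ + V false y₁ * V true y₂) := by
    simp only [Δch, polarPlus, Bool.xor]
    norm_num
    rw [div_eq_div_iff (ne_of_gt (by positivity)) (ne_of_gt (by positivity))]
    ring
  rw [eq1, eq2, eq3, eq4]
  have := key_arith_DWV (W false y₁) (W true y₁) (W false y₂) (W true y₂)
    (V false y₁) (V true y₁) (V false y₂) (V true y₂)
    (hW false y₁) (hW true y₁) (hW false y₂) (hW true y₂) hv0 hv1 ht0 ht1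
  simpa [qOut, Δch] using this

/-- `D(W⁺, V⁺) ≤ 2 D(W, V) − D(W, V)²`. -/
theorem Dpar_polarPlus_le {Y : Type*} [Fintype Y] (W V : Bool → Y → ℝ)
    (hW : IsBDMC W) (hV : IsBDMC V) (hVpos : ∀ x y, 0 < V x y) :
    Dpar (polarPlus W) (polarPlus V) ≤ 2 * Dpar W V - Dpar W V ^ 2 := by
  have hq : ∑ y : Y, qOut W y = 1 := by
    simp only [qOut, ← Finset.sum_div, Finset.sum_add_distrib, hW.2 false, hW.2 true]
    norm_num
  have hL : Dpar (polarPlus W) (polarPlus V)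
      = ∑ y₁ : Y, ∑ y₂ : Y,
          (qOut (polarPlus W) (y₁, y₂, false) * Real.sqrt |Δch (polarPlus V) (y₁, y₂, false)|
           + qOut (polarPlus W) (y₁, y₂, true) * Real.sqrt |Δch (polarPlus V) (y₁, y₂, true)|) := by
    rw [Dpar]
    rw [Fintype.sum_prod_type]
    refine Finset.sum_congr rfl fun y₁ _ => ?_
    rw [Fintype.sum_prod_type]
    refine Finset.sum_congr rfl fun y₂ _ => ?_
    rw [Fintype.sum_bool]
    ring
  rw [hL]
  have step := Finset.sum_le_sum (s := (univ : Finset Y)) fun y₁ _ =>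
    Finset.sum_le_sum (s := (univ : Finset Y)) fun y₂ _ =>
      key_chan_DWV W V y₁ y₂ hW.1 hVpos
  refine le_trans step (le_of_eq ?_)
  have inner : ∀ y₁ : Y,
      ∑ y₂ : Y, qOut W y₁ * qOut W y₂ *
        (Real.sqrt |Δch V y₁| + Real.sqrt |Δch V y₂|
          - Real.sqrt |Δch V y₁| * Real.sqrt |Δch V y₂|)
      = qOut W y₁ * Real.sqrt |Δch V y₁| + qOut W y₁ * Dpar W V
        - qOut W y₁ * Real.sqrt |Δch V y₁| * Dpar W V := by
    intro y₁
    rw [Finset.sum_congr rfl (fun y₂ _ => show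
      qOut W y₁ * qOut W y₂ * (Real.sqrt |Δch V y₁| + Real.sqrt |Δch V y₂|
        - Real.sqrt |Δch V y₁| * Real.sqrt |Δch V y₂|)
      = qOut W y₁ * Real.sqrt |Δch V y₁| * qOut W y₂
        + qOut W y₁ * (qOut W y₂ * Real.sqrt |Δch V y₂|)
        - qOut W y₁ * Real.sqrt |Δch V y₁| * (qOut W y₂ * Real.sqrt |Δch V y₂|) by ring)]
    rw [Finset.sum_sub_distrib, Finset.sum_add_distrib, ← Finset.mul_sum, ← Finset.mul_sum,
      ← Finset.mul_sum, hq, ← Dpar]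
    ring
  rw [Finset.sum_congr rfl fun y₁ _ => inner y₁]
  rw [Finset.sum_sub_distrib, Finset.sum_add_distrib, ← Finset.sum_mul, ← Finset.sum_mul, hq,
    ← Dpar]
  ring
end

section
/- Let W and V be B-DMCs with the same finite output alphabet Y, and assume V(y|x) > 0 for all y ∈ Y and x ∈ {0,1}. Then the plus polar transform satisfies Z(W⁺, V⁺) = Z(W,V)². -/
open Finset
open scoped Classical

/-- `Z(W⁺, V⁺) = Z(W, V)²`. -/
theorem Zpar_polarPlus {Y : Type*} [Fintype Y] (W V : Bool → Y → ℝ)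
    (hW : IsBDMC W) (hV : IsBDMC V) (hVpos : ∀ x y, 0 < V x y) :
    Zpar (polarPlus W) (polarPlus V) = Zpar W V ^ 2 := by
  classical
  have hVne : ∀ x y, V x y ≠ 0 := fun x y => (hVpos x y).ne'
  have hLRpos : ∀ y, 0 < LR V y := fun y => div_pos (hVpos _ _) (hVpos _ _)
  have hLRf : ∀ y₁ y₂ : Y, LR (polarPlus V) (y₁, y₂, false) = LR V y₁ * LR V y₂ := by
    intro y₁ y₂
    simp only [LR, polarPlus, Bool.xor_false, Bool.xor_true, Bool.false_xor, Bool.true_xor,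
      Bool.not_false, Bool.not_true]
    field_simp
  have hLRt : ∀ y₁ y₂ : Y, LR (polarPlus V) (y₁, y₂, true) = (1 / LR V y₁) * LR V y₂ := by
    intro y₁ y₂
    simp only [LR, polarPlus, Bool.xor_false, Bool.xor_true, Bool.false_xor, Bool.true_xor,
      Bool.not_false, Bool.not_true]
    field_simp
  have hsf : ∀ y₁ y₂ : Y, Real.sqrt (LR (polarPlus V) (y₁, y₂, false))
      = Real.sqrt (LR V y₁) * Real.sqrt (LR V y₂) := by
    intro y₁ y₂; rw [hLRf, Real.sqrt_mul (hLRpos y₁).le]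
  have hst : ∀ y₁ y₂ : Y, Real.sqrt (LR (polarPlus V) (y₁, y₂, true))
      = Real.sqrt (1 / LR V y₁) * Real.sqrt (LR V y₂) := by
    intro y₁ y₂; rw [hLRt, Real.sqrt_mul (one_div_nonneg.mpr (hLRpos y₁).le)]
  have hisf : ∀ y₁ y₂ : Y, Real.sqrt (1 / LR (polarPlus V) (y₁, y₂, false))
      = Real.sqrt (1 / LR V y₁) * Real.sqrt (1 / LR V y₂) := by
    intro y₁ y₂
    rw [hLRf, ← Real.sqrt_mul (one_div_nonneg.mpr (hLRpos y₁).le)]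
    congr 1
    rw [div_mul_div_comm, one_mul]
  have hist : ∀ y₁ y₂ : Y, Real.sqrt (1 / LR (polarPlus V) (y₁, y₂, true))
      = Real.sqrt (LR V y₁) * Real.sqrt (1 / LR V y₂) := by
    intro y₁ y₂
    rw [hLRt, ← Real.sqrt_mul (hLRpos y₁).le]
    congr 1
    have h1 := (hLRpos y₁).ne'
    have h2 := (hLRpos y₂).ne'
    field_simp
  set A := ∑ y : Y, W false y * Real.sqrt (LR V y) with hA
  set B := ∑ y : Y, W true y * Real.sqrt (1 / LR V y) with hB
  have e0 : ∑ p : Y × Y × Bool, polarPlus W false p * Real.sqrt (LR (polarPlus V) p)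
      = (1/2) * ((A + B) * A) := by
    rw [Fintype.sum_prod_type]
    simp_rw [Fintype.sum_prod_type, Fintype.sum_bool]
    have : (A + B) * A = ∑ y₁ : Y, ∑ y₂ : Y,
        ((W false y₁ * Real.sqrt (LR V y₁) + W true y₁ * Real.sqrt (1 / LR V y₁))
          * (W false y₂ * Real.sqrt (LR V y₂))) := by
      rw [← Finset.sum_add_distrib, Finset.sum_mul_sum]
    rw [this, Finset.mul_sum]
    refine Finset.sum_congr rfl fun y₁ _ => ?_
    rw [Finset.mul_sum]
    refine Finset.sum_congr rfl fun y₂ _ => ?_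
    rw [hsf, hst]
    simp only [polarPlus, Bool.xor_false, Bool.xor_true, Bool.true_xor, Bool.false_xor,
      Bool.not_false, Bool.not_true]
    ring
  have e1 : ∑ p : Y × Y × Bool, polarPlus W true p * Real.sqrt (1 / LR (polarPlus V) p)
      = (1/2) * ((A + B) * B) := by
    rw [Fintype.sum_prod_type]
    simp_rw [Fintype.sum_prod_type, Fintype.sum_bool]
    have : (A + B) * B = ∑ y₁ : Y, ∑ y₂ : Y,
        ((W false y₁ * Real.sqrt (LR V y₁) + W true y₁ * Real.sqrt (1 / LR V y₁))
          * (W true y₂ * Real.sqrt (1 / LR V y₂))) := by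
      rw [← Finset.sum_add_distrib, Finset.sum_mul_sum]
    rw [this, Finset.mul_sum]
    refine Finset.sum_congr rfl fun y₁ _ => ?_
    rw [Finset.mul_sum]
    refine Finset.sum_congr rfl fun y₂ _ => ?_
    rw [hisf, hist]
    simp only [polarPlus, Bool.xor_false, Bool.xor_true, Bool.true_xor, Bool.false_xor,
      Bool.not_false, Bool.not_true]
    ring
  show (1/2) * ∑ p : Y × Y × Bool, polarPlus W false p * Real.sqrt (LR (polarPlus V) p)
      + (1/2) * ∑ p : Y × Y × Bool, polarPlus W true p * Real.sqrt (1 / LR (polarPlus V) p)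
      = ((1/2) * A + (1/2) * B) ^ 2
  rw [e0, e1]
  ring
end

section
/- Let W and V be B-DMCs with the same finite output alphabet Y, and assume V(y|x) > 0 for all y ∈ Y and x ∈ {0,1}. Then the minus polar transform satisfies Z(W⁻, V⁻) ≤ 2·Z(W,V). -/
open Finset
open scoped Classical

lemma my_sqrt_add_le (a b : ℝ) (ha : 0 ≤ a) (hb : 0 ≤ b) :
    Real.sqrt (a + b) ≤ Real.sqrt a + Real.sqrt b := by
  have h1 := Real.sq_sqrt ha
  have h2 := Real.sq_sqrt hb
  have h3 := Real.sqrt_nonneg a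
  have h4 := Real.sqrt_nonneg b
  have : a + b ≤ (Real.sqrt a + Real.sqrt b) ^ 2 := by nlinarith
  calc Real.sqrt (a + b) ≤ Real.sqrt ((Real.sqrt a + Real.sqrt b) ^ 2) :=
        Real.sqrt_le_sqrt this
    _ = Real.sqrt a + Real.sqrt b := Real.sqrt_sq (by positivity)

lemma my_sqrt_frac_le (x y d w1 w2 : ℝ) (hx : 0 ≤ x) (hy : 0 ≤ y)
    (h1 : 0 < w1) (h2 : 0 < w2) (hw1 : w1 ≤ d) (hw2 : w2 ≤ d) :
    Real.sqrt ((x + y) / d) ≤ Real.sqrt (x / w1) + Real.sqrt (y / w2) := by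
  have hd : 0 < d := lt_of_lt_of_le h1 hw1
  have h : (x + y) / d ≤ x / w1 + y / w2 := by
    rw [add_div]; gcongr
  calc Real.sqrt ((x + y) / d) ≤ Real.sqrt (x / w1 + y / w2) := Real.sqrt_le_sqrt h
    _ ≤ _ := my_sqrt_add_le _ _ (by positivity) (by positivity)

lemma my_collapse {Y : Type*} [Fintype Y] (W : Bool → Y → ℝ)
    (hW1 : ∀ x, ∑ y : Y, W x y = 1) (x1 x2 : Bool) (f g : Y → ℝ) :
    ∑ y1 : Y, ∑ y2 : Y, W x1 y1 * W x2 y2 * (f y1 + g y2)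
      = (∑ y1 : Y, W x1 y1 * f y1) + (∑ y2 : Y, W x2 y2 * g y2) := by
  have h : ∀ y1, ∑ y2 : Y, W x1 y1 * W x2 y2 * (f y1 + g y2)
      = W x1 y1 * f y1 * (∑ y2 : Y, W x2 y2)
        + W x1 y1 * (∑ y2 : Y, W x2 y2 * g y2) := by
    intro y1
    rw [Finset.mul_sum, Finset.mul_sum, ← Finset.sum_add_distrib]
    exact Finset.sum_congr rfl fun y2 _ => by ring
  simp only [h, hW1, mul_one]
  rw [Finset.sum_add_distrib, ← Finset.sum_mul, hW1, one_mul]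

lemma my_pointwise {Y : Type*} [Fintype Y] (W V : Bool → Y → ℝ)
    (hW0 : ∀ x y, 0 ≤ W x y) (hVpos : ∀ x y, 0 < V x y) (y1 y2 : Y) :
    polarMinus W false (y1, y2) * Real.sqrt (LR (polarMinus V) (y1, y2))
      + polarMinus W true (y1, y2) * Real.sqrt (1 / LR (polarMinus V) (y1, y2))
    ≤ (1/2) * (W false y1 * W false y2 * (Real.sqrt (LR V y1) + Real.sqrt (LR V y2))
        + W true y1 * W true y2 * (Real.sqrt (1 / LR V y1) + Real.sqrt (1 / LR V y2))
        + W true y1 * W false y2 * (Real.sqrt (1 / LR V y1) + Real.sqrt (LR V y2))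
        + W false y1 * W true y2 * (Real.sqrt (LR V y1) + Real.sqrt (1 / LR V y2))) := by
  set s : Y → ℝ := fun y => Real.sqrt (LR V y) with hs
  set t : Y → ℝ := fun y => Real.sqrt (1 / LR V y) with ht
  have a1 : 0 < V false y1 := hVpos _ _
  have a2 : 0 < V false y2 := hVpos _ _
  have b1 : 0 < V true y1 := hVpos _ _
  have b2 : 0 < V true y2 := hVpos _ _
  have hVm0 : polarMinus V false (y1, y2)
      = (1/2) * (V true y1 * V true y2 + V false y1 * V false y2) := by
    simp [polarMinus, Fintype.sum_bool]
  have hVm1 : polarMinus V true (y1, y2)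
      = (1/2) * (V false y1 * V true y2 + V true y1 * V false y2) := by
    simp [polarMinus, Fintype.sum_bool]
  have hLm : LR (polarMinus V) (y1, y2)
      = (V false y1 * V true y2 + V true y1 * V false y2)
        / (V true y1 * V true y2 + V false y1 * V false y2) := by
    rw [LR, hVm0, hVm1, mul_div_mul_left]
    norm_num
  have hLmi : 1 / LR (polarMinus V) (y1, y2)
      = (V true y1 * V true y2 + V false y1 * V false y2)
        / (V false y1 * V true y2 + V true y1 * V false y2) := by
    rw [hLm, one_div, inv_div]
  have hs1 : s y1 = Real.sqrt (V true y1 / V false y1) := by rw [hs]; rfl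
  have hs2 : s y2 = Real.sqrt (V true y2 / V false y2) := by rw [hs]; rfl
  have ht1 : t y1 = Real.sqrt (V false y1 / V true y1) := by
    simp only [ht, LR, one_div, ← Real.sqrt_inv]
    rw [inv_div]
  have ht2 : t y2 = Real.sqrt (V false y2 / V true y2) := by
    simp only [ht, LR, one_div, ← Real.sqrt_inv]
    rw [inv_div]
  -- four sqrt bounds
  have B1 : Real.sqrt (LR (polarMinus V) (y1, y2)) ≤ s y1 + s y2 := by
    rw [hLm, hs1, hs2]
    have := my_sqrt_frac_le (V false y1 * V true y2) (V true y1 * V false y2)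
      (V true y1 * V true y2 + V false y1 * V false y2)
      (V false y1 * V false y2) (V false y1 * V false y2)
      (by positivity) (by positivity) (by positivity) (by positivity)
      (by nlinarith) (by nlinarith)
    calc Real.sqrt _ ≤ _ := this
      _ = Real.sqrt (V true y1 / V false y1) + Real.sqrt (V true y2 / V false y2) := by
          rw [add_comm]
          congr 1 <;> congr 1 <;> field_simp <;> ring
  have B2 : Real.sqrt (LR (polarMinus V) (y1, y2)) ≤ t y1 + t y2 := by
    rw [hLm, ht1, ht2]
    have := my_sqrt_frac_le (V false y1 * V true y2) (V true y1 * V false y2)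
      (V true y1 * V true y2 + V false y1 * V false y2)
      (V true y1 * V true y2) (V true y1 * V true y2)
      (by positivity) (by positivity) (by positivity) (by positivity)
      (by nlinarith) (by nlinarith)
    calc Real.sqrt _ ≤ _ := this
      _ = Real.sqrt (V false y1 / V true y1) + Real.sqrt (V false y2 / V true y2) := by
          congr 1 <;> congr 1 <;> field_simp <;> ring
  have B3 : Real.sqrt (1 / LR (polarMinus V) (y1, y2)) ≤ t y1 + s y2 := by
    rw [hLmi, ht1, hs2]
    have := my_sqrt_frac_le (V true y1 * V true y2) (V false y1 * V false y2)
      (V false y1 * V true y2 + V true y1 * V false y2)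
      (V true y1 * V false y2) (V true y1 * V false y2)
      (by positivity) (by positivity) (by positivity) (by positivity)
      (by nlinarith) (by nlinarith)
    calc Real.sqrt _ ≤ _ := this
      _ = Real.sqrt (V false y1 / V true y1) + Real.sqrt (V true y2 / V false y2) := by
          rw [add_comm]
          congr 1 <;> congr 1 <;> field_simp <;> ring
  have B4 : Real.sqrt (1 / LR (polarMinus V) (y1, y2)) ≤ s y1 + t y2 := by
    rw [hLmi, hs1, ht2]
    have := my_sqrt_frac_le (V true y1 * V true y2) (V false y1 * V false y2)
      (V false y1 * V true y2 + V true y1 * V false y2)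
      (V false y1 * V true y2) (V false y1 * V true y2)
      (by positivity) (by positivity) (by positivity) (by positivity)
      (by nlinarith) (by nlinarith)
    calc Real.sqrt _ ≤ _ := this
      _ = Real.sqrt (V true y1 / V false y1) + Real.sqrt (V false y2 / V true y2) := by
          congr 1 <;> congr 1 <;> field_simp <;> ring
  have hWm0 : polarMinus W false (y1, y2)
      = (1/2) * (W true y1 * W true y2 + W false y1 * W false y2) := by
    simp [polarMinus, Fintype.sum_bool]
  have hWm1 : polarMinus W true (y1, y2)
      = (1/2) * (W false y1 * W true y2 + W true y1 * W false y2) := by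
    simp [polarMinus, Fintype.sum_bool]
  rw [hWm0, hWm1]
  have wff : 0 ≤ W false y1 * W false y2 := mul_nonneg (hW0 _ _) (hW0 _ _)
  have wtt : 0 ≤ W true y1 * W true y2 := mul_nonneg (hW0 _ _) (hW0 _ _)
  have wtf : 0 ≤ W true y1 * W false y2 := mul_nonneg (hW0 _ _) (hW0 _ _)
  have wft : 0 ≤ W false y1 * W true y2 := mul_nonneg (hW0 _ _) (hW0 _ _)
  have i1 : W false y1 * W false y2 * Real.sqrt (LR (polarMinus V) (y1, y2))
      ≤ W false y1 * W false y2 * (s y1 + s y2) := mul_le_mul_of_nonneg_left B1 wff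
  have i2 : W true y1 * W true y2 * Real.sqrt (LR (polarMinus V) (y1, y2))
      ≤ W true y1 * W true y2 * (t y1 + t y2) := mul_le_mul_of_nonneg_left B2 wtt
  have i3 : W true y1 * W false y2 * Real.sqrt (1 / LR (polarMinus V) (y1, y2))
      ≤ W true y1 * W false y2 * (t y1 + s y2) := mul_le_mul_of_nonneg_left B3 wtf
  have i4 : W false y1 * W true y2 * Real.sqrt (1 / LR (polarMinus V) (y1, y2))
      ≤ W false y1 * W true y2 * (s y1 + t y2) := mul_le_mul_of_nonneg_left B4 wft
  linarith [i1, i2, i3, i4]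


/-- `Z(W⁻, V⁻) ≤ 2 Z(W, V)`. -/
theorem Zpar_polarMinus_le {Y : Type*} [Fintype Y] (W V : Bool → Y → ℝ)
    (hW : IsBDMC W) (hV : IsBDMC V) (hVpos : ∀ x y, 0 < V x y) :
    Zpar (polarMinus W) (polarMinus V) ≤ 2 * Zpar W V := by
  obtain ⟨hW0, hW1⟩ := hW
  set s : Y → ℝ := fun y => Real.sqrt (LR V y) with hs
  set t : Y → ℝ := fun y => Real.sqrt (1 / LR V y) with ht
  have hZm : Zpar (polarMinus W) (polarMinus V)
      = (1/2) * ∑ p : Y × Y, (polarMinus W false p * Real.sqrt (LR (polarMinus V) p)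
          + polarMinus W true p * Real.sqrt (1 / LR (polarMinus V) p)) := by
    simp only [Zpar]; rw [Finset.sum_add_distrib]; ring
  have hsum : ∑ p : Y × Y, (polarMinus W false p * Real.sqrt (LR (polarMinus V) p)
        + polarMinus W true p * Real.sqrt (1 / LR (polarMinus V) p))
      ≤ ∑ p : Y × Y, (1/2) * (W false p.1 * W false p.2 * (s p.1 + s p.2)
          + W true p.1 * W true p.2 * (t p.1 + t p.2)
          + W true p.1 * W false p.2 * (t p.1 + s p.2)
          + W false p.1 * W true p.2 * (s p.1 + t p.2)) :=
    Finset.sum_le_sum fun p _ => my_pointwise W V hW0 hVpos p.1 p.2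
  have hrhs : ∑ p : Y × Y, (1/2) * (W false p.1 * W false p.2 * (s p.1 + s p.2)
          + W true p.1 * W true p.2 * (t p.1 + t p.2)
          + W true p.1 * W false p.2 * (t p.1 + s p.2)
          + W false p.1 * W true p.2 * (s p.1 + t p.2))
      = 2 * ((∑ y : Y, W false y * s y) + (∑ y : Y, W true y * t y)) := by
    rw [← Finset.mul_sum, Fintype.sum_prod_type]
    have expand : ∑ y1 : Y, ∑ y2 : Y, (W false y1 * W false y2 * (s y1 + s y2)
          + W true y1 * W true y2 * (t y1 + t y2)
          + W true y1 * W false y2 * (t y1 + s y2)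
          + W false y1 * W true y2 * (s y1 + t y2))
        = (∑ y1 : Y, ∑ y2 : Y, W false y1 * W false y2 * (s y1 + s y2))
          + (∑ y1 : Y, ∑ y2 : Y, W true y1 * W true y2 * (t y1 + t y2))
          + (∑ y1 : Y, ∑ y2 : Y, W true y1 * W false y2 * (t y1 + s y2))
          + (∑ y1 : Y, ∑ y2 : Y, W false y1 * W true y2 * (s y1 + t y2)) := by
      simp only [Finset.sum_add_distrib]
    rw [expand, my_collapse W hW1 false false s s, my_collapse W hW1 true true t t,
      my_collapse W hW1 true false t s, my_collapse W hW1 false true s t]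
    ring
  have hZ : 2 * Zpar W V = (∑ y : Y, W false y * s y) + (∑ y : Y, W true y * t y) := by
    simp only [Zpar]; ring
  rw [hZm, hZ]
  calc (1/2) * ∑ p : Y × Y, (polarMinus W false p * Real.sqrt (LR (polarMinus V) p)
          + polarMinus W true p * Real.sqrt (1 / LR (polarMinus V) p))
      ≤ (1/2) * (2 * ((∑ y : Y, W false y * s y) + (∑ y : Y, W true y * t y))) := by
        rw [← hrhs]; linarith [hsum]
    _ = _ := by ring
end

section
/- For nonnegative reals x and y, √((x+y)/(1+xy)) ≤ √x + √y. -/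
open Finset
open scoped Classical

/-- For nonnegative reals, `√((x+y)/(1+xy)) ≤ √x + √y`. -/
theorem sqrt_div_ineq_add (x y : ℝ) (hx : 0 ≤ x) (hy : 0 ≤ y) :
    Real.sqrt ((x + y) / (1 + x * y)) ≤ Real.sqrt x + Real.sqrt y := by
  have h1 : Real.sqrt ((x + y) / (1 + x * y)) ≤ Real.sqrt (x + y) := by
    apply Real.sqrt_le_sqrt
    apply div_le_self (by positivity)
    nlinarith [mul_nonneg hx hy]
  refine h1.trans ?_
  have h2 : Real.sqrt (x + y) ≤ Real.sqrt ((Real.sqrt x + Real.sqrt y) ^ 2) := by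
    apply Real.sqrt_le_sqrt
    have hxx := Real.sq_sqrt hx
    have hyy := Real.sq_sqrt hy
    nlinarith [Real.sqrt_nonneg x, Real.sqrt_nonneg y]
  rwa [Real.sqrt_sq (by positivity)] at h2
end

section
/- For x > 0 and y ≥ 0, √((1+xy)/(x+y)) ≤ √(1/x) + √y. -/
open Finset
open scoped Classical

/-- For `x > 0` and `y ≥ 0`, `√((1+xy)/(x+y)) ≤ √(1/x) + √y`. -/
theorem sqrt_div_ineq_inv (x y : ℝ) (hx : 0 < x) (hy : 0 ≤ y) :
    Real.sqrt ((1 + x * y) / (x + y)) ≤ Real.sqrt (1 / x) + Real.sqrt y := by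
  have hxy : (0:ℝ) ≤ 1 + x * y := by positivity
  have h1 : (1 + x * y) / (x + y) ≤ 1 / x + y := by
    rw [show 1 / x + y = (1 + x * y) / x by field_simp]
    exact div_le_div_of_nonneg_left hxy hx (by linarith)
  calc Real.sqrt ((1 + x * y) / (x + y)) ≤ Real.sqrt (1 / x + y) :=
        Real.sqrt_le_sqrt h1
    _ ≤ Real.sqrt (1 / x) + Real.sqrt y := by
        have h2 : 1 / x + y ≤ (Real.sqrt (1/x) + Real.sqrt y)^2 := by
          nlinarith [Real.sq_sqrt (by positivity : (0:ℝ) ≤ 1/x), Real.sq_sqrt hy,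
            Real.sqrt_nonneg (1/x), Real.sqrt_nonneg y, mul_nonneg (Real.sqrt_nonneg (1/x)) (Real.sqrt_nonneg y)]
        calc Real.sqrt (1/x + y) ≤ Real.sqrt ((Real.sqrt (1/x) + Real.sqrt y)^2) := Real.sqrt_le_sqrt h2
          _ = _ := Real.sqrt_sq (by positivity)
end

section
/- Let Δ₁ and Δ₂ be independent random variables on a probability space, each taking values in [−1,1], with E[√|Δ₁|] = μ₁ and E[√|Δ₂|] = μ₂. Then E[√|(Δ₁+Δ₂)/(1+Δ₁Δ₂)|] ≤ μ₁ + μ₂ − μ₁μ₂ and E[√|(Δ₁−Δ₂)/(1−Δ₁Δ₂)|] ≤ μ₁ + μ₂ − μ₁μ₂, where division by zero is interpreted with the convention that x/0 = 0. -/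
open Finset
open scoped Classical

lemma key_poly (s t : ℝ) (hs0 : 0 ≤ s) (hs1 : s ≤ 1) (ht0 : 0 ≤ t) (ht1 : t ≤ 1) :
    s^2 + t^2 ≤ (s + t - s*t)^2 * (1 + s^2*t^2) := by
  have hu : (0:ℝ) ≤ 1 - s := by linarith
  have hv : (0:ℝ) ≤ 1 - t := by linarith
  have h1 : 0 ≤ s*t*(1-s)*(1-t)^2*s :=
    mul_nonneg (mul_nonneg (mul_nonneg (mul_nonneg hs0 ht0) hu) (sq_nonneg _)) hs0
  have h2 : 0 ≤ s*t*(1-s)^2*(1-t)*t :=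
    mul_nonneg (mul_nonneg (mul_nonneg (mul_nonneg hs0 ht0) (sq_nonneg _)) hv) ht0
  have h3 : 0 ≤ (s*t*(1-s)*(1-t))^2 := sq_nonneg _
  have h4 : 0 ≤ s*t*(1-s)*(1-t)^2 :=
    mul_nonneg (mul_nonneg (mul_nonneg hs0 ht0) hu) (sq_nonneg _)
  have h5 : 0 ≤ s*t*(1-s)^2*(1-t) :=
    mul_nonneg (mul_nonneg (mul_nonneg hs0 ht0) (sq_nonneg _)) hv
  nlinarith [h1, h2, h3, h4, h5]

lemma mix (x y : ℝ) (hx0 : 0 ≤ x) (hx1 : x ≤ 1) (hy0 : 0 ≤ y) (hy1 : y ≤ 1) :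
    |x - y| * (1 + x*y) ≤ (x + y) * (1 - x*y) := by
  rcases abs_cases (x - y) with ⟨h, _⟩ | ⟨h, _⟩ <;> rw [h] <;>
    nlinarith [mul_nonneg hy0 (mul_nonneg (sub_nonneg.2 hx1) (by linarith : (0:ℝ) ≤ 1 + x)),
      mul_nonneg hx0 (mul_nonneg (sub_nonneg.2 hy1) (by linarith : (0:ℝ) ≤ 1 + y))]

lemma step1 (a b : ℝ) (ha1 : -1 ≤ a) (ha2 : a ≤ 1) (hb1 : -1 ≤ b) (hb2 : b ≤ 1) :
    |a + b| * (1 + |a| * |b|) ≤ (|a| + |b|) * (1 + a * b) := by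
  rcases le_or_gt 0 a with ha | ha <;> rcases le_or_gt 0 b with hb | hb
  · rw [abs_of_nonneg ha, abs_of_nonneg hb, abs_of_nonneg (by linarith : (0:ℝ) ≤ a + b)]
  · have := mix a (-b) ha ha2 (by linarith) (by linarith)
    rw [abs_of_nonneg ha, abs_of_neg hb]
    calc |a + b| * (1 + a * -b) = |a - -b| * (1 + a * -b) := by rw [show a - -b = a + b by ring]
      _ ≤ (a + -b) * (1 - a * -b) := this
      _ = (a + -b) * (1 + a * b) := by ring
  · have := mix b (-a) hb hb2 (by linarith) (by linarith)
    rw [abs_of_neg ha, abs_of_nonneg hb]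
    calc |a + b| * (1 + -a * b) = |b - -a| * (1 + b * -a) := by rw [show b - -a = a + b by ring]; ring
      _ ≤ (b + -a) * (1 - b * -a) := this
      _ = (-a + b) * (1 + a * b) := by ring
  · rw [abs_of_neg ha, abs_of_neg hb, abs_of_nonpos (by linarith : a + b ≤ 0)]
    nlinarith

lemma key (a b : ℝ) (ha1 : -1 ≤ a) (ha2 : a ≤ 1) (hb1 : -1 ≤ b) (hb2 : b ≤ 1) :
    Real.sqrt |(a + b) / (1 + a * b)| ≤
      Real.sqrt |a| + Real.sqrt |b| - Real.sqrt |a| * Real.sqrt |b| := by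
  set s := Real.sqrt |a| with hs
  set t := Real.sqrt |b| with ht
  have hs0 : 0 ≤ s := Real.sqrt_nonneg _
  have ht0 : 0 ≤ t := Real.sqrt_nonneg _
  have hs1 : s ≤ 1 := Real.sqrt_le_one.2 (abs_le.2 ⟨ha1, ha2⟩)
  have ht1 : t ≤ 1 := Real.sqrt_le_one.2 (abs_le.2 ⟨hb1, hb2⟩)
  have hsq : s^2 = |a| := Real.sq_sqrt (abs_nonneg a)
  have htq : t^2 = |b| := Real.sq_sqrt (abs_nonneg b)
  have hrhs : 0 ≤ s + t - s * t := by nlinarith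
  rcases eq_or_ne (1 + a * b) 0 with h0 | h0
  · rw [h0, div_zero, abs_zero, Real.sqrt_zero]; exact hrhs
  · have hpos : 0 < 1 + a * b := by
      rcases lt_or_eq_of_le (by nlinarith : (0:ℝ) ≤ 1 + a * b) with h | h
      · exact h
      · exact absurd h.symm h0
    have hmid : |(a + b) / (1 + a * b)| ≤ (s + t - s * t)^2 := by
      rw [abs_div, abs_of_pos hpos, div_le_iff₀ hpos]
      have h1 := step1 a b ha1 ha2 hb1 hb2
      have h2 := key_poly s t hs0 hs1 ht0 ht1
      rw [hsq, htq] at h2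
      have hxy : (0:ℝ) < 1 + |a| * |b| := by positivity
      nlinarith [mul_nonneg (mul_nonneg (abs_nonneg a) (abs_nonneg b)) hpos.le,
        mul_le_mul_of_nonneg_right h2 hpos.le, abs_nonneg (a + b)]
    calc Real.sqrt |(a + b) / (1 + a * b)| ≤ Real.sqrt ((s + t - s*t)^2) :=
          Real.sqrt_le_sqrt hmid
      _ = s + t - s*t := Real.sqrt_sq hrhs


open MeasureTheory in
/-- For independent `[-1,1]`-valued random variables `Δ₁, Δ₂` with
`E[√|Δᵢ|] = μᵢ`, both `E[√|(Δ₁+Δ₂)/(1+Δ₁Δ₂)|]` and `E[√|(Δ₁−Δ₂)/(1−Δ₁Δ₂)|]` are at most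
`μ₁ + μ₂ − μ₁ μ₂` (division by zero interpreted as `0`). -/
theorem expectation_sqrt_abs_polar_combination_le
    {Ω : Type*} [MeasurableSpace Ω] (μ : Measure Ω) [IsProbabilityMeasure μ]
    (Δ₁ Δ₂ : Ω → ℝ) (hm₁ : Measurable Δ₁) (hm₂ : Measurable Δ₂)
    (hb₁ : ∀ ω, Δ₁ ω ∈ Set.Icc (-1 : ℝ) 1) (hb₂ : ∀ ω, Δ₂ ω ∈ Set.Icc (-1 : ℝ) 1)
    (hindep : ProbabilityTheory.IndepFun Δ₁ Δ₂ μ)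
    (μ₁ μ₂ : ℝ)
    (hμ₁ : μ₁ = ∫ ω, Real.sqrt |Δ₁ ω| ∂μ)
    (hμ₂ : μ₂ = ∫ ω, Real.sqrt |Δ₂ ω| ∂μ) :
    (∫ ω, Real.sqrt |(Δ₁ ω + Δ₂ ω) / (1 + Δ₁ ω * Δ₂ ω)| ∂μ ≤ μ₁ + μ₂ - μ₁ * μ₂) ∧
    (∫ ω, Real.sqrt |(Δ₁ ω - Δ₂ ω) / (1 - Δ₁ ω * Δ₂ ω)| ∂μ ≤ μ₁ + μ₂ - μ₁ * μ₂) := by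
  
  have φm : Measurable (fun x : ℝ => Real.sqrt |x|) :=
    Real.continuous_sqrt.measurable.comp measurable_abs
  have hf₁m : Measurable (fun ω => Real.sqrt |Δ₁ ω|) := φm.comp hm₁
  have hf₂m : Measurable (fun ω => Real.sqrt |Δ₂ ω|) := φm.comp hm₂
  have bnd : ∀ (f : Ω → ℝ), Measurable f → (∀ ω, 0 ≤ f ω) → (∀ ω, f ω ≤ 1) →
      Integrable f μ := fun f hfm h0 h1 =>
    Integrable.mono' (integrable_const 1) hfm.aestronglyMeasurable
      (Filter.Eventually.of_forall fun ω => by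
        rw [Real.norm_eq_abs, abs_of_nonneg (h0 ω)]; exact h1 ω)
  have hs1 : ∀ ω, Real.sqrt |Δ₁ ω| ≤ 1 := fun ω =>
    Real.sqrt_le_one.2 (abs_le.2 ⟨(hb₁ ω).1, (hb₁ ω).2⟩)
  have hs2 : ∀ ω, Real.sqrt |Δ₂ ω| ≤ 1 := fun ω =>
    Real.sqrt_le_one.2 (abs_le.2 ⟨(hb₂ ω).1, (hb₂ ω).2⟩)
  have hi₁ : Integrable (fun ω => Real.sqrt |Δ₁ ω|) μ :=
    bnd _ hf₁m (fun ω => Real.sqrt_nonneg _) hs1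
  have hi₂ : Integrable (fun ω => Real.sqrt |Δ₂ ω|) μ :=
    bnd _ hf₂m (fun ω => Real.sqrt_nonneg _) hs2
  have himul : Integrable (fun ω => Real.sqrt |Δ₁ ω| * Real.sqrt |Δ₂ ω|) μ :=
    bnd _ (hf₁m.mul hf₂m) (fun ω => mul_nonneg (Real.sqrt_nonneg _) (Real.sqrt_nonneg _))
      (fun ω => mul_le_one₀ (hs1 ω) (Real.sqrt_nonneg _) (hs2 ω))
  have hmul : ∫ ω, Real.sqrt |Δ₁ ω| * Real.sqrt |Δ₂ ω| ∂μ = μ₁ * μ₂ := by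
    rw [hμ₁, hμ₂]
    exact ProbabilityTheory.IndepFun.integral_fun_mul_eq_mul_integral (hindep.comp φm φm) hf₁m.aestronglyMeasurable hf₂m.aestronglyMeasurable
  have hadd : Integrable (fun ω => Real.sqrt |Δ₁ ω| + Real.sqrt |Δ₂ ω|) μ := hi₁.add hi₂
  have hRHSint : Integrable
      (fun ω => Real.sqrt |Δ₁ ω| + Real.sqrt |Δ₂ ω| - Real.sqrt |Δ₁ ω| * Real.sqrt |Δ₂ ω|) μ :=
    hadd.sub himul
  have hRHSval : ∫ ω, (Real.sqrt |Δ₁ ω| + Real.sqrt |Δ₂ ω|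
      - Real.sqrt |Δ₁ ω| * Real.sqrt |Δ₂ ω|) ∂μ = μ₁ + μ₂ - μ₁ * μ₂ := by
    rw [integral_sub hadd himul, integral_add hi₁ hi₂, hmul, ← hμ₁, ← hμ₂]
  have keyall : ∀ ω, Real.sqrt |(Δ₁ ω + Δ₂ ω) / (1 + Δ₁ ω * Δ₂ ω)| ≤
      Real.sqrt |Δ₁ ω| + Real.sqrt |Δ₂ ω| - Real.sqrt |Δ₁ ω| * Real.sqrt |Δ₂ ω| := fun ω =>
    key _ _ (hb₁ ω).1 (hb₁ ω).2 (hb₂ ω).1 (hb₂ ω).2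
  have keyall' : ∀ ω, Real.sqrt |(Δ₁ ω - Δ₂ ω) / (1 - Δ₁ ω * Δ₂ ω)| ≤
      Real.sqrt |Δ₁ ω| + Real.sqrt |Δ₂ ω| - Real.sqrt |Δ₁ ω| * Real.sqrt |Δ₂ ω| := by
    intro ω
    have h := key (Δ₁ ω) (-Δ₂ ω) (hb₁ ω).1 (hb₁ ω).2 (by linarith [(hb₂ ω).2])
      (by linarith [(hb₂ ω).1])
    rw [show Δ₁ ω + -Δ₂ ω = Δ₁ ω - Δ₂ ω by ring, show 1 + Δ₁ ω * -Δ₂ ω = 1 - Δ₁ ω * Δ₂ ω by ring,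
      abs_neg] at h
    exact h
  have hLHSnn : ∀ (f : Ω → ℝ), (∀ ω, Real.sqrt |f ω| ≤
      Real.sqrt |Δ₁ ω| + Real.sqrt |Δ₂ ω| - Real.sqrt |Δ₁ ω| * Real.sqrt |Δ₂ ω|) →
      Measurable f → ∫ ω, Real.sqrt |f ω| ∂μ ≤ μ₁ + μ₂ - μ₁ * μ₂ := by
    intro f hle hfm
    have hble : ∀ ω, Real.sqrt |f ω| ≤ 1 := by
      intro ω
      refine le_trans (hle ω) ?_
      nlinarith [hs1 ω, hs2 ω, Real.sqrt_nonneg (abs (Δ₁ ω)), Real.sqrt_nonneg (abs (Δ₂ ω))]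
    have hint : Integrable (fun ω => Real.sqrt |f ω|) μ :=
      bnd _ (φm.comp hfm) (fun ω => Real.sqrt_nonneg _) hble
    calc ∫ ω, Real.sqrt |f ω| ∂μ
        ≤ ∫ ω, (Real.sqrt |Δ₁ ω| + Real.sqrt |Δ₂ ω|
            - Real.sqrt |Δ₁ ω| * Real.sqrt |Δ₂ ω|) ∂μ := integral_mono hint hRHSint hle
      _ = μ₁ + μ₂ - μ₁ * μ₂ := hRHSval
  constructor
  · exact hLHSnn _ keyall ((hm₁.add hm₂).div ((measurable_const.add (hm₁.mul hm₂))))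
  · exact hLHSnn _ keyall' ((hm₁.sub hm₂).div ((measurable_const.sub (hm₁.mul hm₂))))
end

section
/- For all real a, b in the interval [0,1], √(|a²−b²|/(1−a²b²)) ≤ √((a²+b²)/(1+a²b²)) ≤ a + b − ab, where in the degenerate case ab = 1 (i.e., a = b = 1) the first fraction 0/0 is interpreted as 0. -/
open Finset
open scoped Classical

/-- For `a, b ∈ [0,1]`,
`√(|a²−b²|/(1−a²b²)) ≤ √((a²+b²)/(1+a²b²)) ≤ a + b − ab`
(with the Lean convention `0/0 = 0` handling the degenerate case `a = b = 1`). -/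
theorem sqrt_abs_sq_div_le (a b : ℝ) (ha : a ∈ Set.Icc (0 : ℝ) 1)
    (hb : b ∈ Set.Icc (0 : ℝ) 1) :
    Real.sqrt (|a ^ 2 - b ^ 2| / (1 - a ^ 2 * b ^ 2))
        ≤ Real.sqrt ((a ^ 2 + b ^ 2) / (1 + a ^ 2 * b ^ 2)) ∧
    Real.sqrt ((a ^ 2 + b ^ 2) / (1 + a ^ 2 * b ^ 2)) ≤ a + b - a * b := by
  
  obtain ⟨ha0, ha1⟩ := ha
  obtain ⟨hb0, hb1⟩ := hb
  have hab : a * b ≤ 1 := by nlinarith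
  constructor
  · apply Real.sqrt_le_sqrt
    rcases eq_or_lt_of_le hab with h | h
    · have ha' : a = 1 := by nlinarith
      have hb' : b = 1 := by nlinarith
      subst ha'; subst hb'
      norm_num
    · have h1 : 0 < 1 - a ^ 2 * b ^ 2 := by nlinarith [mul_pos (sub_pos.2 h) (show (0:ℝ) < a*b+1 by nlinarith [mul_nonneg ha0 hb0])]
      have h2 : (0:ℝ) < 1 + a ^ 2 * b ^ 2 := by positivity
      rw [div_le_div_iff₀ h1 h2]
      rcases abs_cases (a ^ 2 - b ^ 2) with ⟨he, _⟩ | ⟨he, _⟩ <;> rw [he]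
      · nlinarith [mul_nonneg (sq_nonneg b) (show (0:ℝ) ≤ 1 - a^2*a^2 by nlinarith [mul_le_one₀ (show a^2 ≤ 1 by nlinarith) (sq_nonneg a) (show a^2 ≤ 1 by nlinarith)])]
      · nlinarith [mul_nonneg (sq_nonneg a) (show (0:ℝ) ≤ 1 - b^2*b^2 by nlinarith [mul_le_one₀ (show b^2 ≤ 1 by nlinarith) (sq_nonneg b) (show b^2 ≤ 1 by nlinarith)])]
  · have hr : 0 ≤ a + b - a * b := by nlinarith
    have h2 : (0:ℝ) < 1 + a ^ 2 * b ^ 2 := by positivity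
    have key : (a ^ 2 + b ^ 2) / (1 + a ^ 2 * b ^ 2) ≤ (a + b - a * b) ^ 2 := by
      rw [div_le_iff₀ h2]
      nlinarith [mul_nonneg (mul_nonneg ha0 hb0) (mul_nonneg (sub_nonneg.2 ha1) (sub_nonneg.2 hb1)), mul_nonneg ha0 hb0, sq_nonneg (a*b), mul_le_one₀ ha1 hb0 hb1, mul_nonneg (mul_nonneg (mul_nonneg ha0 hb0) (mul_nonneg ha0 hb0)) (mul_nonneg (sub_nonneg.2 ha1) (sub_nonneg.2 hb1))]
    calc Real.sqrt ((a ^ 2 + b ^ 2) / (1 + a ^ 2 * b ^ 2)) ≤ Real.sqrt ((a + b - a * b) ^ 2) := Real.sqrt_le_sqrt key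
      _ = a + b - a * b := Real.sqrt_sq hr
end

section
/- Let W and V be B-DMCs with the same finite output alphabet Y, and assume V(y|x) > 0 for all y ∈ Y and x ∈ {0,1}. Let p₀ := q_W({y ∈ Y : Δ_V(y) = 0}). Then q_{W⁻}({(y₁,y₂) ∈ Y×Y : Δ_{V⁻}(y₁y₂) = 0}) = 2p₀ − p₀², and q_{W⁺}({(y₁,y₂,u₁) ∈ Y×Y×{0,1} : Δ_{V⁺}(y₁y₂u₁) = 0}) ≥ p₀². -/
open Finset
open scoped Classical

/-- With `p₀ := q_W({y : Δ_V(y) = 0})`, the minus transform satisfies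
`q_{W⁻}({Δ_{V⁻} = 0}) = 2 p₀ − p₀²` and the plus transform satisfies
`q_{W⁺}({Δ_{V⁺} = 0}) ≥ p₀²`. -/
theorem qOut_delta_zero_polar {Y : Type*} [Fintype Y] (W V : Bool → Y → ℝ)
    (hW : IsBDMC W) (hV : IsBDMC V) (hVpos : ∀ x y, 0 < V x y)
    (p₀ : ℝ) (hp₀ : p₀ = ∑ y ∈ univ.filter (fun y : Y => Δch V y = 0), qOut W y) :
    (∑ p ∈ univ.filter (fun p : Y × Y => Δch (polarMinus V) p = 0),
        qOut (polarMinus W) p) = 2 * p₀ - p₀ ^ 2 ∧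
    (∑ p ∈ univ.filter (fun p : Y × Y × Bool => Δch (polarPlus V) p = 0),
        qOut (polarPlus W) p) ≥ p₀ ^ 2 := by
  have hqnn : ∀ y : Y, 0 ≤ qOut W y := fun y => by
    unfold qOut
    have := hW.1 false y; have := hW.1 true y; linarith
  have qsum : ∑ y : Y, qOut W y = 1 := by
    have hf := hW.2 false; have ht := hW.2 true
    unfold qOut
    rw [← Finset.sum_div, Finset.sum_add_distrib, hf, ht]; norm_num
  have dz : ∀ y : Y, Δch V y = 0 ↔ V false y = V true y := by
    intro y
    have hd : 0 < V false y + V true y := add_pos (hVpos _ _) (hVpos _ _)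
    unfold Δch
    rw [div_eq_zero_iff, sub_eq_zero]
    simp [hd.ne']
  have hqm : ∀ p : Y × Y, qOut (polarMinus W) p = qOut W p.1 * qOut W p.2 := by
    intro p
    simp only [qOut, polarMinus, Fintype.sum_bool]
    cases p; simp; ring
  have dzm : ∀ p : Y × Y, Δch (polarMinus V) p = 0 ↔ (Δch V p.1 = 0 ∨ Δch V p.2 = 0) := by
    rintro ⟨y₁, y₂⟩
    have hnum : polarMinus V false (y₁, y₂) - polarMinus V true (y₁, y₂)
        = (1/2) * ((V false y₁ - V true y₁) * (V false y₂ - V true y₂)) := by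
      simp only [polarMinus, Fintype.sum_bool]; simp; ring
    have hden : polarMinus V false (y₁, y₂) + polarMinus V true (y₁, y₂)
        = (1/2) * ((V false y₁ + V true y₁) * (V false y₂ + V true y₂)) := by
      simp only [polarMinus, Fintype.sum_bool]; simp; ring
    have hdpos : 0 < polarMinus V false (y₁, y₂) + polarMinus V true (y₁, y₂) := by
      rw [hden]
      have := hVpos false y₁; have := hVpos true y₁
      have := hVpos false y₂; have := hVpos true y₂
      nlinarith
    have hd1 : V false y₁ + V true y₁ ≠ 0 :=
      (add_pos (hVpos _ _) (hVpos _ _)).ne'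
    have hd2 : V false y₂ + V true y₂ ≠ 0 :=
      (add_pos (hVpos _ _) (hVpos _ _)).ne'
    unfold Δch
    rw [div_eq_zero_iff]
    simp only [hdpos.ne', or_false]
    rw [hnum]
    simp [mul_eq_zero, hd1, hd2]
  -- abbreviations
  set s : ℝ := ∑ y ∈ univ.filter (fun y : Y => Δch V y = 0), qOut W y with hs
  set t : ℝ := ∑ y ∈ univ.filter (fun y : Y => ¬ Δch V y = 0), qOut W y with ht
  have hst : s + t = 1 := by
    rw [hs, ht, Finset.sum_filter_add_sum_filter_not, qsum]
  constructor
  · -- minus part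
    have hfil : univ.filter (fun p : Y × Y => Δch (polarMinus V) p = 0)
        = univ.filter (fun p : Y × Y => Δch V p.1 = 0 ∨ Δch V p.2 = 0) := by
      apply Finset.filter_congr
      intro p _
      simp [dzm p]
    have hsplit := Finset.sum_filter_add_sum_filter_not (univ : Finset (Y × Y))
      (fun p : Y × Y => Δch V p.1 = 0 ∨ Δch V p.2 = 0)
      (fun p : Y × Y => qOut W p.1 * qOut W p.2)
    have htotal : ∑ p : Y × Y, qOut W p.1 * qOut W p.2 = 1 := by
      rw [Fintype.sum_prod_type, ← Finset.sum_mul_sum, qsum]; ring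
    have hcompl : ∑ p ∈ univ.filter (fun p : Y × Y =>
        ¬(Δch V p.1 = 0 ∨ Δch V p.2 = 0)), qOut W p.1 * qOut W p.2 = t * t := by
      have : univ.filter (fun p : Y × Y => ¬(Δch V p.1 = 0 ∨ Δch V p.2 = 0))
          = (univ.filter (fun y : Y => ¬ Δch V y = 0)) ×ˢ
            (univ.filter (fun y : Y => ¬ Δch V y = 0)) := by
        ext p
        simp [not_or, and_assoc]
      rw [this, Finset.sum_product, ← Finset.sum_mul_sum]
    rw [hfil]
    calc ∑ p ∈ univ.filter (fun p : Y × Y => Δch V p.1 = 0 ∨ Δch V p.2 = 0),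
          qOut (polarMinus W) p
        = ∑ p ∈ univ.filter (fun p : Y × Y => Δch V p.1 = 0 ∨ Δch V p.2 = 0),
          qOut W p.1 * qOut W p.2 := Finset.sum_congr rfl (fun p _ => hqm p)
      _ = 2 * p₀ - p₀ ^ 2 := by
          rw [hp₀]
          have := hsplit
          rw [hcompl, htotal] at this
          nlinarith [this, hst]
  · -- plus part
    have hqp : ∀ y₁ y₂ : Y, ∑ u₁ : Bool, qOut (polarPlus W) (y₁, y₂, u₁)
        = qOut W y₁ * qOut W y₂ := by
      intro y₁ y₂
      simp only [qOut, polarPlus, Fintype.sum_bool]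
      simp; ring
    have hnn : ∀ p : Y × Y × Bool, 0 ≤ qOut (polarPlus W) p := by
      intro p
      unfold qOut polarPlus
      have h1 := hW.1 (Bool.xor p.2.2 false) p.1
      have h2 := hW.1 (Bool.xor p.2.2 true) p.1
      have h3 := hW.1 false p.2.1
      have h4 := hW.1 true p.2.1
      have : (0:ℝ) ≤ 1/2 * W (Bool.xor p.2.2 false) p.1 * W false p.2.1 := by positivity
      have : (0:ℝ) ≤ 1/2 * W (Bool.xor p.2.2 true) p.1 * W true p.2.1 := by positivity
      positivity
    set B : Finset (Y × Y × Bool) :=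
      (univ.filter (fun y : Y => Δch V y = 0)) ×ˢ
      ((univ.filter (fun y : Y => Δch V y = 0)) ×ˢ (univ : Finset Bool)) with hB
    have hsub : B ⊆ univ.filter (fun p : Y × Y × Bool => Δch (polarPlus V) p = 0) := by
      intro p hp
      rw [hB] at hp
      simp only [Finset.mem_product, Finset.mem_filter, Finset.mem_univ, true_and] at hp ⊢
      obtain ⟨h1, h2, _⟩ := hp
      rw [dz] at h1 h2
      unfold Δch polarPlus
      rw [div_eq_zero_iff]
      left
      rcases p with ⟨y₁, y₂, u₁⟩
      cases u₁ <;> simp <;> rw [h1, h2] <;> ring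
    have hBsum : ∑ p ∈ B, qOut (polarPlus W) p = s * s := by
      rw [hB, Finset.sum_product]
      have : ∀ y₁ ∈ univ.filter (fun y : Y => Δch V y = 0),
          ∑ q ∈ (univ.filter (fun y : Y => Δch V y = 0)) ×ˢ (univ : Finset Bool),
            qOut (polarPlus W) (y₁, q) = qOut W y₁ * s := by
        intro y₁ _
        rw [Finset.sum_product]
        have : ∀ y₂ ∈ univ.filter (fun y : Y => Δch V y = 0),
            ∑ u₁ : Bool, qOut (polarPlus W) (y₁, y₂, u₁) = qOut W y₁ * qOut W y₂ :=
          fun y₂ _ => hqp y₁ y₂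
        rw [Finset.sum_congr rfl this, ← Finset.mul_sum, ← hs]
      rw [Finset.sum_congr rfl this, ← Finset.sum_mul, ← hs]
    calc ∑ p ∈ univ.filter (fun p : Y × Y × Bool => Δch (polarPlus V) p = 0),
          qOut (polarPlus W) p
        ≥ ∑ p ∈ B, qOut (polarPlus W) p :=
          Finset.sum_le_sum_of_subset_of_nonneg hsub (fun p _ _ => hnn p)
      _ = p₀ ^ 2 := by rw [hBsum, hp₀]; ring
end

section
/- Let W and V be B-DMCs with the same finite output alphabet Y, and assume V(y|x) > 0 for all y ∈ Y and x ∈ {0,1}. Then I(W⁻, V⁻) = (1/4)∑_{y₁,y₂∈Y} [ W(y₁|0)W(y₂|0)·log₂(1 + Δ_V(y₁)Δ_V(y₂)) + W(y₁|0)W(y₂|1)·log₂(1 − Δ_V(y₁)Δ_V(y₂)) + W(y₁|1)W(y₂|0)·log₂(1 − Δ_V(y₁)Δ_V(y₂)) + W(y₁|1)W(y₂|1)·log₂(1 + Δ_V(y₁)Δ_V(y₂)) ]. -/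
open Finset
open scoped Classical

lemma argPlus (a₁ b₁ a₂ b₂ : ℝ) (ha₁ : 0 < a₁) (hb₁ : 0 < b₁) (ha₂ : 0 < a₂) (hb₂ : 0 < b₂) :
    (1/2*(b₁*b₂ + a₁*a₂)) / ((1/2*(b₁*b₂+a₁*a₂) + 1/2*(a₁*b₂+b₁*a₂))/2)
      = 1 + (a₁-b₁)/(a₁+b₁)*((a₂-b₂)/(a₂+b₂)) := by
  have h₁ : a₁ + b₁ ≠ 0 := by positivity
  have h₂ : a₂ + b₂ ≠ 0 := by positivity
  have hd : 1/2*(b₁*b₂+a₁*a₂) + 1/2*(a₁*b₂+b₁*a₂) ≠ 0 := by positivity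
  field_simp
  ring

lemma argMinus (a₁ b₁ a₂ b₂ : ℝ) (ha₁ : 0 < a₁) (hb₁ : 0 < b₁) (ha₂ : 0 < a₂) (hb₂ : 0 < b₂) :
    (1/2*(a₁*b₂ + b₁*a₂)) / ((1/2*(b₁*b₂+a₁*a₂) + 1/2*(a₁*b₂+b₁*a₂))/2)
      = 1 - (a₁-b₁)/(a₁+b₁)*((a₂-b₂)/(a₂+b₂)) := by
  have h₁ : a₁ + b₁ ≠ 0 := by positivity
  have h₂ : a₂ + b₂ ≠ 0 := by positivity
  have hd : 1/2*(b₁*b₂+a₁*a₂) + 1/2*(a₁*b₂+b₁*a₂) ≠ 0 := by positivity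
  field_simp
  ring

/-- Explicit formula for `I(W⁻, V⁻)` in terms of `Δ_V`. -/
theorem Imm_polarMinus_eq {Y : Type*} [Fintype Y] (W V : Bool → Y → ℝ)
    (hW : IsBDMC W) (hV : IsBDMC V) (hVpos : ∀ x y, 0 < V x y) :
    Imm (polarMinus W) (polarMinus V) =
      (1/4) * ∑ y₁ : Y, ∑ y₂ : Y,
        (W false y₁ * W false y₂ * Real.logb 2 (1 + Δch V y₁ * Δch V y₂)
         + W false y₁ * W true y₂ * Real.logb 2 (1 - Δch V y₁ * Δch V y₂)
         + W true y₁ * W false y₂ * Real.logb 2 (1 - Δch V y₁ * Δch V y₂)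
         + W true y₁ * W true y₂ * Real.logb 2 (1 + Δch V y₁ * Δch V y₂)) := by
  simp only [Imm, polarMinus, qOut, Δch, Fintype.sum_bool, Fintype.sum_prod_type,
    Bool.xor_false, Bool.xor_true, Bool.not_true, Bool.not_false, Bool.true_xor, Bool.false_xor]
  have h1 : ∀ y₁ y₂ : Y,
      1 / 2 * (V false y₁ * V true y₂ + V true y₁ * V false y₂) /
        ((1 / 2 * (V true y₁ * V true y₂ + V false y₁ * V false y₂) +
            1 / 2 * (V false y₁ * V true y₂ + V true y₁ * V false y₂)) / 2)
      = 1 - (V false y₁ - V true y₁) / (V false y₁ + V true y₁) *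
            ((V false y₂ - V true y₂) / (V false y₂ + V true y₂)) :=
    fun y₁ y₂ => argMinus _ _ _ _ (hVpos _ _) (hVpos _ _) (hVpos _ _) (hVpos _ _)
  have h2 : ∀ y₁ y₂ : Y,
      1 / 2 * (V true y₁ * V true y₂ + V false y₁ * V false y₂) /
        ((1 / 2 * (V true y₁ * V true y₂ + V false y₁ * V false y₂) +
            1 / 2 * (V false y₁ * V true y₂ + V true y₁ * V false y₂)) / 2)
      = 1 + (V false y₁ - V true y₁) / (V false y₁ + V true y₁) *
            ((V false y₂ - V true y₂) / (V false y₂ + V true y₂)) :=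
    fun y₁ y₂ => argPlus _ _ _ _ (hVpos _ _) (hVpos _ _) (hVpos _ _) (hVpos _ _)
  simp only [h1, h2]
  rw [← Finset.sum_add_distrib, Finset.mul_sum, Finset.mul_sum]
  refine Finset.sum_congr rfl fun y₁ _ => ?_
  rw [← Finset.sum_add_distrib, Finset.mul_sum, Finset.mul_sum]
  refine Finset.sum_congr rfl fun y₂ _ => ?_
  ring
end

section
/- Let W and V be B-DMCs with the same finite output alphabet Y, and assume V(y|x) > 0 for all y ∈ Y and x ∈ {0,1}. Then I(W⁺, V⁺) = (1/4)∑_{y₁,y₂∈Y} [ W(y₁|0)W(y₂|0)·log₂(1 + (Δ_V(y₁)+Δ_V(y₂))/(1+Δ_V(y₁)Δ_V(y₂))) + W(y₁|0)W(y₂|1)·log₂(1 + (Δ_V(y₁)−Δ_V(y₂))/(1−Δ_V(y₁)Δ_V(y₂))) + W(y₁|1)W(y₂|0)·log₂(1 − (Δ_V(y₁)−Δ_V(y₂))/(1−Δ_V(y₁)Δ_V(y₂))) + W(y₁|1)W(y₂|1)·log₂(1 − (Δ_V(y₁)+Δ_V(y₂))/(1+Δ_V(y₁)Δ_V(y₂)))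 ]. -/
open Finset
open scoped Classical

section AuxPolar

private lemma polar_aux_A (a b c d : ℝ) (ha : 0 < a) (hb : 0 < b) (hc : 0 < c) (hd : 0 < d) :
    1/2*a*c / ((1/2*a*c + 1/2*b*d)/2)
      = 1 + ((a-b)/(a+b) + (c-d)/(c+d)) / (1 + (a-b)/(a+b) * ((c-d)/(c+d))) := by
  have h1 : a + b ≠ 0 := by positivity
  have h2 : c + d ≠ 0 := by positivity
  have h3 : a*c + b*d ≠ 0 := by positivity
  have hP : 1 + (a-b)/(a+b) * ((c-d)/(c+d)) = 2*(a*c+b*d)/((a+b)*(c+d)) := by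
    field_simp; ring
  rw [hP]
  field_simp
  ring

private lemma polar_aux_B (a b c d : ℝ) (ha : 0 < a) (hb : 0 < b) (hc : 0 < c) (hd : 0 < d) :
    1/2*b*d / ((1/2*a*c + 1/2*b*d)/2)
      = 1 - ((a-b)/(a+b) + (c-d)/(c+d)) / (1 + (a-b)/(a+b) * ((c-d)/(c+d))) := by
  have h1 : a + b ≠ 0 := by positivity
  have h2 : c + d ≠ 0 := by positivity
  have h3 : a*c + b*d ≠ 0 := by positivity
  have hP : 1 + (a-b)/(a+b) * ((c-d)/(c+d)) = 2*(a*c+b*d)/((a+b)*(c+d)) := by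
    field_simp; ring
  rw [hP]
  field_simp
  ring

private lemma polar_aux_C (a b c d : ℝ) (ha : 0 < a) (hb : 0 < b) (hc : 0 < c) (hd : 0 < d) :
    1/2*b*c / ((1/2*b*c + 1/2*a*d)/2)
      = 1 - ((a-b)/(a+b) - (c-d)/(c+d)) / (1 - (a-b)/(a+b) * ((c-d)/(c+d))) := by
  have h1 : a + b ≠ 0 := by positivity
  have h2 : c + d ≠ 0 := by positivity
  have h3 : a*d + b*c ≠ 0 := by positivity
  have hP : 1 - (a-b)/(a+b) * ((c-d)/(c+d)) = 2*(a*d+b*c)/((a+b)*(c+d)) := by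
    field_simp; ring
  rw [hP]
  field_simp
  ring

private lemma polar_aux_D (a b c d : ℝ) (ha : 0 < a) (hb : 0 < b) (hc : 0 < c) (hd : 0 < d) :
    1/2*a*d / ((1/2*b*c + 1/2*a*d)/2)
      = 1 + ((a-b)/(a+b) - (c-d)/(c+d)) / (1 - (a-b)/(a+b) * ((c-d)/(c+d))) := by
  have h1 : a + b ≠ 0 := by positivity
  have h2 : c + d ≠ 0 := by positivity
  have h3 : a*d + b*c ≠ 0 := by positivity
  have hP : 1 - (a-b)/(a+b) * ((c-d)/(c+d)) = 2*(a*d+b*c)/((a+b)*(c+d)) := by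
    field_simp; ring
  rw [hP]
  field_simp
  ring

end AuxPolar

/-- Explicit formula for `I(W⁺, V⁺)` in terms of `Δ_V`. -/
theorem Imm_polarPlus_eq {Y : Type*} [Fintype Y] (W V : Bool → Y → ℝ)
    (hW : IsBDMC W) (hV : IsBDMC V) (hVpos : ∀ x y, 0 < V x y) :
    Imm (polarPlus W) (polarPlus V) =
      (1/4) * ∑ y₁ : Y, ∑ y₂ : Y,
        (W false y₁ * W false y₂
            * Real.logb 2 (1 + (Δch V y₁ + Δch V y₂) / (1 + Δch V y₁ * Δch V y₂))
         + W false y₁ * W true y₂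
            * Real.logb 2 (1 + (Δch V y₁ - Δch V y₂) / (1 - Δch V y₁ * Δch V y₂))
         + W true y₁ * W false y₂
            * Real.logb 2 (1 - (Δch V y₁ - Δch V y₂) / (1 - Δch V y₁ * Δch V y₂))
         + W true y₁ * W true y₂
            * Real.logb 2 (1 - (Δch V y₁ + Δch V y₂) / (1 + Δch V y₁ * Δch V y₂))) := by
  simp only [Imm, polarPlus, qOut, Fintype.sum_prod_type, Fintype.sum_bool,
    Bool.xor_false, Bool.xor_true, Bool.false_xor, Bool.true_xor, Bool.not_true, Bool.not_false]
  rw [← Finset.sum_add_distrib, Finset.mul_sum, Finset.mul_sum]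
  refine Finset.sum_congr rfl fun y₁ _ => ?_
  rw [← Finset.sum_add_distrib, Finset.mul_sum, Finset.mul_sum]
  refine Finset.sum_congr rfl fun y₂ _ => ?_
  simp only [Δch]
  rw [polar_aux_A (V false y₁) (V true y₁) (V false y₂) (V true y₂)
        (hVpos _ _) (hVpos _ _) (hVpos _ _) (hVpos _ _),
      polar_aux_B (V false y₁) (V true y₁) (V false y₂) (V true y₂)
        (hVpos _ _) (hVpos _ _) (hVpos _ _) (hVpos _ _),
      polar_aux_C (V false y₁) (V true y₁) (V false y₂) (V true y₂)
        (hVpos _ _) (hVpos _ _) (hVpos _ _) (hVpos _ _),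
      polar_aux_D (V false y₁) (V true y₁) (V false y₂) (V true y₂)
        (hVpos _ _) (hVpos _ _) (hVpos _ _) (hVpos _ _)]
  ring
end
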